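/- arXiv:1010.2127 — 5 statements merged into one kernel-verified Lean document; each statement's English description precedes it below -/
import Mathlib

section
/- Let (u, v) be a nonnegative solution of the radial system (S) on (r0, R), 0 ≤ r0 < R < ∞, such that u or v is unbounded on every left neighborhood of R. Then lim_{r→R} u(r) = lim_{r→R} v(r) = lim_{r→R} u'(r) = lim_{r→R} v'(r) = +∞, and there exist C > 0 and ρ ∈ (r0, R) such that for all r ∈ (ρ, R): u(r) ≤ C·(R−r)^{−γ} and v(r) ≤ C·(R−r)^{−ξ}. -/
open Real Set Filter
open Topology

/-- `(u, v)` is a solution of the radial system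
`u'' + ((N-1)/r) u' = r^a v^δ`, `v'' + ((N-1)/r) v' = r^b u^μ` on the set `I ⊆ (0,∞)`. -/
def RadialSystem (N : ℕ) (a b δ μ : ℝ) (u v : ℝ → ℝ) (I : Set ℝ) : Prop :=
  ContDiffOn ℝ 2 u I ∧ ContDiffOn ℝ 2 v I ∧
  ∀ r ∈ I,
    deriv (deriv u) r + (((N : ℝ) - 1) / r) * deriv u r = r ^ a * v r ^ δ ∧
    deriv (deriv v) r + (((N : ℝ) - 1) / r) * deriv v r = r ^ b * u r ^ μ


lemma rpow_lower_bound {t1 R r : ℝ} (ht1 : 0 < t1) (e : ℝ) (hr : t1 ≤ r) (hrR : r ≤ R) :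
    min (t1 ^ e) (R ^ e) ≤ r ^ e := by
  rcases le_or_gt 0 e with he | he
  · exact le_trans (min_le_left _ _) (Real.rpow_le_rpow ht1.le hr he)
  · exact le_trans (min_le_right _ _) (Real.rpow_le_rpow_of_nonpos (ht1.trans_le hr) hrR he.le)

lemma rpow_upper_bound {t1 R r : ℝ} (ht1 : 0 < t1) (e : ℝ) (hr : t1 ≤ r) (hrR : r ≤ R) :
    r ^ e ≤ max (t1 ^ e) (R ^ e) := by
  rcases le_or_gt 0 e with he | he
  · exact le_trans (Real.rpow_le_rpow (ht1.le.trans hr) hrR he) (le_max_right _ _)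
  · exact le_trans (Real.rpow_le_rpow_of_nonpos ht1 hr he.le) (le_max_left _ _)

lemma mono_helper {f f' : ℝ → ℝ} {s R : ℝ}
    (hc : ContinuousOn f (Ico s R))
    (hd : ∀ r ∈ Ioo s R, HasDerivAt f (f' r) r)
    (h0 : ∀ r ∈ Ioo s R, 0 ≤ f' r) :
    MonotoneOn f (Ico s R) := by
  apply monotoneOn_of_deriv_nonneg (convex_Ico s R) hc
  · intro x hx
    rw [interior_Ico] at hx
    exact (hd x hx).differentiableAt.differentiableWithinAt
  · intro x hx
    rw [interior_Ico] at hx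
    rw [(hd x hx).deriv]
    exact h0 x hx

lemma compare_helper {F G F' G' : ℝ → ℝ} {s R : ℝ}
    (hFc : ContinuousOn F (Ico s R)) (hGc : ContinuousOn G (Ico s R))
    (hF : ∀ r ∈ Ioo s R, HasDerivAt F (F' r) r)
    (hG : ∀ r ∈ Ioo s R, HasDerivAt G (G' r) r)
    (hd : ∀ r ∈ Ioo s R, F' r ≤ G' r) (h0 : F s ≤ G s) :
    ∀ r ∈ Ico s R, F r ≤ G r := by
  intro r hr
  have hm : MonotoneOn (fun x => G x - F x) (Ico s R) :=
    mono_helper (hGc.sub hFc) (fun t ht => (hG t ht).sub (hF t ht))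
      (fun t ht => sub_nonneg.2 (hd t ht))
  have hsR : s < R := lt_of_le_of_lt hr.1 hr.2
  have h2 := hm (left_mem_Ico.2 hsR) hr hr.1
  simp only [] at h2
  linarith

lemma phi_hasDerivAt {N : ℕ} (hN : 1 ≤ N) {f : ℝ → ℝ} {r : ℝ} (hr : 0 < r)
    (hf : HasDerivAt (deriv f) (deriv (deriv f) r) r) :
    HasDerivAt (fun x => x ^ (N - 1) * deriv f x)
      (r ^ (N - 1) * (deriv (deriv f) r + (((N : ℝ) - 1) / r) * deriv f r)) r := by
  have h : HasDerivAt (fun x => x ^ (N - 1) * deriv f x)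
      (↑(N - 1) * r ^ (N - 1 - 1) * deriv f r + r ^ (N - 1) * deriv (deriv f) r) r :=
    (hasDerivAt_pow (N - 1) r).mul hf
  convert h using 1
  rcases eq_or_lt_of_le hN with h1 | h2
  · subst h1
    norm_num
  · obtain ⟨m, rfl⟩ : ∃ m, N = m + 2 := ⟨N - 2, by omega⟩
    have hm : (m + 2 - 1 : ℕ) = m + 1 := by omega
    rw [hm, show (m + 1 - 1 : ℕ) = m from rfl]
    push_cast
    rw [pow_succ]
    field_simp
    ring

lemma contDiffOn_facts {f : ℝ → ℝ} {s : Set ℝ} (hs : IsOpen s) (hf : ContDiffOn ℝ 2 f s) :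
    (∀ r ∈ s, HasDerivAt f (deriv f r) r) ∧
    (∀ r ∈ s, HasDerivAt (deriv f) (deriv (deriv f) r) r) ∧
    ContinuousOn (deriv f) s := by
  have h1 : DifferentiableOn ℝ f s := hf.differentiableOn (by norm_num)
  have h2 : ContDiffOn ℝ 1 (deriv f) s := hf.deriv_of_isOpen hs (by norm_num)
  have h2' : DifferentiableOn ℝ (deriv f) s := h2.differentiableOn (by norm_num)
  refine ⟨fun r hr => ((h1 r hr).differentiableAt (hs.mem_nhds hr)).hasDerivAt,
    fun r hr => ((h2' r hr).differentiableAt (hs.mem_nhds hr)).hasDerivAt,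
    h2'.continuousOn⟩

lemma bdd_transfer {N : ℕ} (hN : 1 ≤ N) {e p r0 R : ℝ} (hp : 0 < p)
    (hr0 : 0 ≤ r0) {f g : ℝ → ℝ}
    (hg1 : ∀ r ∈ Ioo r0 R, HasDerivAt g (deriv g r) r)
    (hg2 : ∀ r ∈ Ioo r0 R, HasDerivAt (deriv g) (deriv (deriv g) r) r)
    (heq : ∀ r ∈ Ioo r0 R,
      deriv (deriv g) r + (((N : ℝ) - 1) / r) * deriv g r = r ^ e * f r ^ p)
    (hgc : ContinuousOn (deriv g) (Ioo r0 R))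
    (hf0 : ∀ r ∈ Ioo r0 R, 0 ≤ f r)
    {s : ℝ} (hs : s ∈ Ioo r0 R) (hbdd : BddAbove (f '' Ioo s R)) :
    BddAbove (g '' Ioo s R) := by
  obtain ⟨M, hM⟩ := hbdd
  set M' := max M 0 with hM'def
  have hM'0 : 0 ≤ M' := le_max_right _ _
  have hfM : ∀ r ∈ Ioo s R, f r ≤ M' := fun r hr =>
    le_trans (hM (mem_image_of_mem f hr)) (le_max_left _ _)
  have hs0 : 0 < s := lt_of_le_of_lt hr0 hs.1
  have hsR : s < R := hs.2
  have hR0 : 0 < R := hs0.trans hsR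
  have hsub : Ioo s R ⊆ Ioo r0 R := Ioo_subset_Ioo_left hs.1.le
  have hsub' : Ico s R ⊆ Ioo r0 R := fun x hx => ⟨lt_of_lt_of_le hs.1 hx.1, hx.2⟩
  set ψ : ℝ → ℝ := fun x => x ^ (N - 1) * deriv g x with hψdef
  have hψd : ∀ r ∈ Ioo s R, HasDerivAt ψ (r ^ (N - 1) * (r ^ e * f r ^ p)) r := by
    intro r hr
    have h0 := phi_hasDerivAt hN (lt_of_le_of_lt hr0 (hsub hr).1) (hg2 r (hsub hr))
    rwa [heq r (hsub hr)] at h0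
  have hψc : ContinuousOn ψ (Ico s R) :=
    ((continuous_pow (N - 1)).continuousOn).mul (hgc.mono hsub')
  set K := R ^ (N - 1) * (max (s ^ e) (R ^ e) * M' ^ p) with hKdef
  have hK0 : 0 ≤ K := by
    apply mul_nonneg (pow_nonneg hR0.le _)
    apply mul_nonneg (le_trans (Real.rpow_nonneg hs0.le e) (le_max_left _ _))
      (Real.rpow_nonneg hM'0 p)
  have hψbd : ∀ r ∈ Ico s R, ψ r ≤ ψ s + K * (r - s) := by
    have := compare_helper (F := ψ) (G := fun x => ψ s + K * (x - s))
      (F' := fun r => r ^ (N - 1) * (r ^ e * f r ^ p)) (G' := fun _ => K)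
      hψc (by fun_prop) hψd
      (fun r _ => by
        simpa using ((hasDerivAt_id r).sub_const s).const_mul K |>.const_add (ψ s))
      ?_ (by simp)
    · exact this
    · intro r hr
      have hrs : s ≤ r := hr.1.le
      have hrR : r ≤ R := hr.2.le
      have hb1 : r ^ (N - 1) ≤ R ^ (N - 1) := pow_le_pow_left₀ (hs0.le.trans hrs) hrR _
      have hb2 : r ^ e ≤ max (s ^ e) (R ^ e) := rpow_upper_bound hs0 e hrs hrR
      have hb3 : f r ^ p ≤ M' ^ p :=
        Real.rpow_le_rpow (hf0 r (hsub hr)) (hfM r hr) hp.le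
      have h4 : (0:ℝ) ≤ r ^ e := Real.rpow_nonneg (hs0.le.trans hrs) e
      have h5 : (0:ℝ) ≤ f r ^ p := Real.rpow_nonneg (hf0 r (hsub hr)) p
      calc r ^ (N - 1) * (r ^ e * f r ^ p)
          ≤ R ^ (N - 1) * (max (s ^ e) (R ^ e) * M' ^ p) := by
            apply mul_le_mul hb1 (mul_le_mul hb2 hb3 h5
              (le_trans (Real.rpow_nonneg hs0.le e) (le_max_left _ _)))
              (mul_nonneg h4 h5) (pow_nonneg hR0.le _)
        _ = K := rfl
  set B := ψ s + K * (R - s) with hBdef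
  have hψB : ∀ r ∈ Ico s R, ψ r ≤ B := by
    intro r hr
    refine le_trans (hψbd r hr) ?_
    have : r - s ≤ R - s := by linarith [hr.2]
    nlinarith [hK0]
  set Cg := max B 0 / s ^ (N - 1) with hCgdef
  have hCg0 : 0 ≤ Cg := div_nonneg (le_max_right _ _) (pow_nonneg hs0.le _)
  have hg'bd : ∀ r ∈ Ico s R, deriv g r ≤ Cg := by
    intro r hr
    have hr0' : 0 < r := hs0.trans_le hr.1
    have hrp : (0:ℝ) < r ^ (N - 1) := pow_pos hr0' _
    have hsp : (0:ℝ) < s ^ (N - 1) := pow_pos hs0 _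
    have heq1 : deriv g r = ψ r / r ^ (N - 1) := by
      field_simp [hψdef]
      simp only [hψdef]
      ring
    rw [heq1]
    calc ψ r / r ^ (N - 1) ≤ max B 0 / r ^ (N - 1) := by
          gcongr
          exact le_trans (hψB r hr) (le_max_left _ _)
      _ ≤ Cg := by
          apply div_le_div_of_nonneg_left (le_max_right _ _) hsp
          exact pow_le_pow_left₀ hs0.le hr.1 _
  have hgc' : ContinuousOn g (Ico s R) := fun r hr =>
    ((hg1 r (hsub' hr)).continuousAt).continuousWithinAt
  have hgbd : ∀ r ∈ Ico s R, g r ≤ g s + Cg * (r - s) := by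
    apply compare_helper (F := g) (G := fun x => g s + Cg * (x - s))
      (F' := fun r => deriv g r) (G' := fun _ => Cg) hgc' (by fun_prop)
      (fun r hr => hg1 r (hsub hr))
      (fun r _ => by
        simpa using ((hasDerivAt_id r).sub_const s).const_mul Cg |>.const_add (g s))
      (fun r hr => hg'bd r ⟨hr.1.le, hr.2⟩) (by simp)
  refine ⟨g s + Cg * (R - s), ?_⟩
  rintro y ⟨r, hr, rfl⟩
  refine le_trans (hgbd r ⟨hr.1.le, hr.2⟩) ?_
  have : r - s ≤ R - s := by linarith [hr.2]
  nlinarith [hCg0]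

lemma tendsto_of_mono_unbdd {g : ℝ → ℝ} {s1 R : ℝ} (h : s1 < R)
    (hm : MonotoneOn g (Ico s1 R))
    (hu : ¬ BddAbove (g '' Ioo s1 R)) :
    Tendsto g (𝓝[<] R) atTop := by
  rw [tendsto_atTop]
  intro K
  rw [not_bddAbove_iff] at hu
  obtain ⟨y, ⟨x, hx, rfl⟩, hy⟩ := hu K
  filter_upwards [Ioo_mem_nhdsLT_of_mem (show R ∈ Ioc x R from ⟨hx.2, le_refl R⟩)] with r hr
  exact le_trans hy.le (hm ⟨hx.1.le, hx.2⟩ ⟨hx.1.le.trans hr.1.le, hr.2⟩ hr.1.le)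

lemma eventual_incr {N : ℕ} (hN : 1 ≤ N) {e p r0 R : ℝ} (hp : 0 < p)
    (hr0 : 0 ≤ r0) (hr0R : r0 < R) {f g : ℝ → ℝ}
    (hg1 : ∀ r ∈ Ioo r0 R, HasDerivAt g (deriv g r) r)
    (hg2 : ∀ r ∈ Ioo r0 R, HasDerivAt (deriv g) (deriv (deriv g) r) r)
    (heq : ∀ r ∈ Ioo r0 R,
      deriv (deriv g) r + (((N : ℝ) - 1) / r) * deriv g r = r ^ e * f r ^ p)
    (hgc : ContinuousOn (deriv g) (Ioo r0 R))
    (hf0 : ∀ r ∈ Ioo r0 R, 0 ≤ f r)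
    (hunb : ∀ s ∈ Ioo r0 R, ¬ BddAbove (g '' Ioo s R)) :
    ∃ s1 ∈ Ioo r0 R,
      (∀ r ∈ Ico s1 R, 0 < r ^ (N - 1) * deriv g r) ∧
      (∀ r ∈ Ico s1 R, 0 < deriv g r) ∧
      MonotoneOn g (Ico s1 R) ∧
      MonotoneOn (fun x => x ^ (N - 1) * deriv g x) (Ico s1 R) := by
  set ψ : ℝ → ℝ := fun x => x ^ (N - 1) * deriv g x with hψdef
  have hpos : ∀ r ∈ Ioo r0 R, (0:ℝ) < r := fun r hr => lt_of_le_of_lt hr0 hr.1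
  have hψd : ∀ r ∈ Ioo r0 R, HasDerivAt ψ (r ^ (N - 1) * (r ^ e * f r ^ p)) r := by
    intro r hr
    have h0 := phi_hasDerivAt hN (hpos r hr) (hg2 r hr)
    rwa [heq r hr] at h0
  have hψd0 : ∀ r ∈ Ioo r0 R, 0 ≤ r ^ (N - 1) * (r ^ e * f r ^ p) := by
    intro r hr
    exact mul_nonneg (pow_nonneg (hpos r hr).le _)
      (mul_nonneg (Real.rpow_nonneg (hpos r hr).le _) (Real.rpow_nonneg (hf0 r hr) _))
  have hψc : ContinuousOn ψ (Ioo r0 R) := ((continuous_pow (N - 1)).continuousOn).mul hgc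
  -- there is a point where ψ is positive
  have hex : ∃ s1 ∈ Ioo r0 R, 0 < ψ s1 := by
    by_contra hcon
    push_neg at hcon
    set s := (r0 + R) / 2 with hsdef
    have hsI : s ∈ Ioo r0 R := ⟨by linarith, by linarith⟩
    have hs0 : 0 < s := hpos s hsI
    have hsub' : Ico s R ⊆ Ioo r0 R := fun x hx => ⟨lt_of_lt_of_le hsI.1 hx.1, hx.2⟩
    have hanti : MonotoneOn (fun x => -g x) (Ico s R) := by
      apply mono_helper (f' := fun r => -(deriv g r))
      · exact (ContinuousOn.neg (fun r hr => ((hg1 r (hsub' hr)).continuousAt).continuousWithinAt))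
      · intro r hr
        exact (hg1 r (hsub' ⟨hr.1.le, hr.2⟩)).neg
      · intro r hr
        have hrI : r ∈ Ioo r0 R := hsub' ⟨hr.1.le, hr.2⟩
        have h1' : r ^ (N - 1) * deriv g r ≤ 0 := by simpa [hψdef] using hcon r hrI
        have hrp : (0:ℝ) < r ^ (N - 1) := pow_pos (hpos r hrI) _
        have : deriv g r ≤ 0 := by
          by_contra hcc
          push_neg at hcc
          linarith [mul_pos hrp hcc]
        linarith
    refine hunb s hsI ⟨g s, ?_⟩
    rintro y ⟨x, hx, rfl⟩
    have := hanti (left_mem_Ico.2 hsI.2) ⟨hx.1.le, hx.2⟩ hx.1.le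
    simpa using this
  obtain ⟨s1, hs1I, hψs1⟩ := hex
  have hsub' : Ico s1 R ⊆ Ioo r0 R := fun x hx => ⟨lt_of_lt_of_le hs1I.1 hx.1, hx.2⟩
  have hψmono : MonotoneOn ψ (Ico s1 R) := by
    apply mono_helper (f' := fun r => r ^ (N - 1) * (r ^ e * f r ^ p))
      (hψc.mono hsub')
      (fun r hr => hψd r (hsub' ⟨hr.1.le, hr.2⟩))
      (fun r hr => hψd0 r (hsub' ⟨hr.1.le, hr.2⟩))
  have hψpos : ∀ r ∈ Ico s1 R, 0 < ψ r := fun r hr =>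
    lt_of_lt_of_le hψs1 (hψmono (left_mem_Ico.2 (lt_of_le_of_lt hr.1 hr.2)) hr hr.1)
  have hg'pos : ∀ r ∈ Ico s1 R, 0 < deriv g r := by
    intro r hr
    have h1' : 0 < r ^ (N - 1) * deriv g r := by simpa [hψdef] using hψpos r hr
    have hrp : (0:ℝ) < r ^ (N - 1) := pow_pos (hpos r (hsub' hr)) _
    by_contra hcc
    push_neg at hcc
    nlinarith [h1', hrp, hcc]
  have hgmono : MonotoneOn g (Ico s1 R) := by
    apply mono_helper (f' := fun r => deriv g r)
      (fun r hr => ((hg1 r (hsub' hr)).continuousAt).continuousWithinAt)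
      (fun r hr => hg1 r (hsub' ⟨hr.1.le, hr.2⟩))
      (fun r hr => (hg'pos r ⟨hr.1.le, hr.2⟩).le)
  exact ⟨s1, hs1I, hψpos, hg'pos, hgmono, hψmono⟩

set_option maxHeartbeats 1000000 in
lemma iterate_lemma {u : ℝ → ℝ} {t1 R c k q : ℝ} (ht1R : t1 < R) (hc : 0 < c)
    (hk : 1 < k) (hq : 0 < q)
    (hmono : MonotoneOn u (Ico t1 R))
    (h1 : ∀ x ∈ Ico t1 R, 1 ≤ u x)
    (hstep : ∀ x ∈ Ico t1 R, ∀ h : ℝ, 0 < h → x + h < R →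
      u x + c * u x ^ k * h ^ q ≤ u (x + h)) :
    ∃ C > 0, ∀ x ∈ Ico t1 R, u x ≤ C * (R - x) ^ (-(q / (k - 1))) := by
  have hk1 : 0 < k - 1 := by linarith
  obtain ⟨γ', hγ'def⟩ : ∃ w : ℝ, w = q / (k - 1) := ⟨_, rfl⟩
  have hγ' : 0 < γ' := hγ'def ▸ div_pos hq hk1
  obtain ⟨ee, heedef⟩ : ∃ w : ℝ, w = -(1 / γ') := ⟨_, rfl⟩
  have hee : ee < 0 := by
    rw [heedef]
    simp only [neg_neg, neg_lt, neg_zero]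
    positivity
  obtain ⟨Θ, hΘdef⟩ : ∃ w : ℝ, w = c ^ (-(1:ℝ) / q) := ⟨_, rfl⟩
  have hΘ : 0 < Θ := hΘdef ▸ Real.rpow_pos_of_pos hc _
  obtain ⟨ω, hωdef⟩ : ∃ w : ℝ, w = (2:ℝ) ^ ee := ⟨_, rfl⟩
  have hω0 : 0 < ω := hωdef ▸ Real.rpow_pos_of_pos two_pos _
  have hω1 : ω < 1 := hωdef ▸ Real.rpow_lt_one_of_one_lt_of_neg one_lt_two hee
  have h1ω : 0 < 1 - ω := by linarith
  obtain ⟨Θ', hΘ'def⟩ : ∃ w : ℝ, w = Θ / (1 - ω) := ⟨_, rfl⟩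
  have hΘ' : 0 < Θ' := hΘ'def ▸ div_pos hΘ h1ω
  refine ⟨Θ' ^ γ', Real.rpow_pos_of_pos hΘ' _, ?_⟩
  intro x hx
  have hux1 : 1 ≤ u x := h1 x hx
  have hux0 : 0 < u x := lt_of_lt_of_le one_pos hux1
  obtain ⟨t, htdef⟩ : ∃ w : ℝ, w = u x ^ ee := ⟨_, rfl⟩
  have ht0 : 0 < t := htdef ▸ Real.rpow_pos_of_pos hux0 _
  have hclaim : R - x ≤ Θ' * t := by
    by_contra hcon
    push_neg at hcon
    -- the iteration sequence
    obtain ⟨z, hz0, hzsucc⟩ : ∃ z : ℕ → ℝ, z 0 = x ∧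
        ∀ n, z (n + 1) = z n + Θ * u (z n) ^ ee :=
      ⟨fun n => Nat.rec x (fun _ w => w + Θ * u w ^ ee) n, rfl, fun _ => rfl⟩
    obtain ⟨β, hβdef⟩ : ∃ w : ℝ, w = Θ * t := ⟨_, rfl⟩
    have hβ0 : 0 < β := hβdef ▸ mul_pos hΘ ht0
    have hβΘ' : β / (1 - ω) = Θ' * t := by
      rw [hΘ'def, hβdef]; ring
    have hβR : x + β / (1 - ω) < R := by
      rw [hβΘ']; linarith
    have key : ∀ n : ℕ, x ≤ z n ∧ z n ≤ x + β * (1 - ω ^ n) / (1 - ω) ∧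
        2 ^ n * u x ≤ u (z n) := by
      intro n
      induction n with
      | zero => simp [hz0]
      | succ n ih =>
        obtain ⟨ihx, ihb, ihu⟩ := ih
        have hωn : 0 < ω ^ n := pow_pos hω0 n
        have hωn1 : ω ^ n ≤ 1 := pow_le_one₀ hω0.le hω1.le
        have hfrac : β * (1 - ω ^ n) / (1 - ω) ≤ β / (1 - ω) :=
          (div_le_div_iff_of_pos_right h1ω).2 (by nlinarith)
        have hznR : z n < R := by
          calc z n ≤ x + β * (1 - ω ^ n) / (1 - ω) := ihb
            _ ≤ x + β / (1 - ω) := by linarith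
            _ < R := hβR
        have hznIco : z n ∈ Ico t1 R := ⟨le_trans hx.1 ihx, hznR⟩
        have hupos : 0 < u (z n) := lt_of_lt_of_le one_pos (h1 _ hznIco)
        have h2npos : (0:ℝ) < 2 ^ n * u x := by positivity
        have hh0 : 0 < Θ * u (z n) ^ ee :=
          mul_pos hΘ (Real.rpow_pos_of_pos hupos _)
        -- bound on the step size
        have hhle : u (z n) ^ ee ≤ ω ^ n * t := by
          have h2 : (2:ℝ) ^ n * u x ≤ u (z n) := ihu
          have h3 : u (z n) ^ ee ≤ ((2:ℝ) ^ n * u x) ^ ee :=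
            Real.rpow_le_rpow_of_nonpos h2npos h2 hee.le
          refine h3.trans_eq ?_
          rw [Real.mul_rpow (by positivity) hux0.le, htdef]
          congr 1
          rw [← Real.rpow_natCast (2:ℝ) n, ← Real.rpow_natCast ω n, hωdef,
            ← Real.rpow_mul (by norm_num), ← Real.rpow_mul (by norm_num)]
          ring_nf
        have hstepb : z (n + 1) ≤ x + β * (1 - ω ^ (n + 1)) / (1 - ω) := by
          rw [hzsucc n]
          have : Θ * u (z n) ^ ee ≤ β * ω ^ n := by
            calc Θ * u (z n) ^ ee ≤ Θ * (ω ^ n * t) := by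
                  exact mul_le_mul_of_nonneg_left hhle hΘ.le
              _ = β * ω ^ n := by rw [hβdef]; ring
          have heq2 : β * (1 - ω ^ n) / (1 - ω) + β * ω ^ n
              = β * (1 - ω ^ (n + 1)) / (1 - ω) := by
            field_simp
            ring
          linarith
        have hzn1R : z (n + 1) < R := by
          have : β * (1 - ω ^ (n + 1)) / (1 - ω) ≤ β / (1 - ω) :=
            (div_le_div_iff_of_pos_right h1ω).2 (by nlinarith [pow_pos hω0 (n+1)])
          linarith [hstepb, hβR]
        -- apply the step inequality
        have happly := hstep (z n) hznIco (Θ * u (z n) ^ ee) hh0 (by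
          rw [← hzsucc n]; exact hzn1R)
        have hgain : c * u (z n) ^ k * (Θ * u (z n) ^ ee) ^ q = u (z n) := by
          rw [Real.mul_rpow hΘ.le (Real.rpow_nonneg hupos.le _)]
          rw [← Real.rpow_mul hupos.le]
          rw [hΘdef, ← Real.rpow_mul hc.le]
          have hq' : q ≠ 0 := ne_of_gt hq
          have he1 : -1 / q * q = -1 := by field_simp
          have he2 : ee * q = -(k - 1) := by
            rw [heedef, hγ'def]
            field_simp
          rw [he1, he2, Real.rpow_neg_one]
          have h10 : u (z n) ^ k * u (z n) ^ (-(k - 1)) = u (z n) := by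
            rw [← Real.rpow_add hupos]
            have : k + -(k - 1) = 1 := by ring
            rw [this, Real.rpow_one]
          calc c * u (z n) ^ k * (c⁻¹ * u (z n) ^ (-(k - 1)))
              = (c * c⁻¹) * (u (z n) ^ k * u (z n) ^ (-(k - 1))) := by ring
            _ = u (z n) := by rw [mul_inv_cancel₀ (ne_of_gt hc), h10, one_mul]
        have hu1 : 2 ^ (n + 1) * u x ≤ u (z (n + 1)) := by
          rw [← hzsucc n, hgain] at happly
          have h11 : (2:ℝ) ^ (n + 1) * u x = 2 * (2 ^ n * u x) := by ring
          rw [h11]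
          linarith
        exact ⟨by
          have := hh0
          rw [hzsucc n]; linarith, hstepb, hu1⟩
    -- contradiction: u (z n) is unbounded but ≤ u ŷ
    obtain ⟨yh, hyhdef⟩ : ∃ w : ℝ, w = x + Θ' * t := ⟨_, rfl⟩
    have hyhR : yh < R := by rw [hyhdef]; linarith
    have hyhIco : yh ∈ Ico t1 R := ⟨le_trans hx.1 (by nlinarith [mul_pos hΘ' ht0]), hyhR⟩
    have hbd : ∀ n : ℕ, (2:ℝ) ^ n ≤ u yh := by
      intro n
      obtain ⟨hxzn, hznb, huzn⟩ := key n
      have hznyh : z n ≤ yh := by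
        have h5 : β * (1 - ω ^ n) / (1 - ω) ≤ β / (1 - ω) :=
          (div_le_div_iff_of_pos_right h1ω).2 (by nlinarith [pow_pos hω0 n])
        rw [hyhdef, ← hβΘ']
        linarith
      have hznIco : z n ∈ Ico t1 R := ⟨le_trans hx.1 hxzn, lt_of_le_of_lt hznyh hyhR⟩
      have := hmono hznIco hyhIco hznyh
      have h6 : (2:ℝ) ^ n ≤ 2 ^ n * u x := le_mul_of_one_le_right (by positivity) hux1
      linarith
    obtain ⟨n, hn⟩ := pow_unbounded_of_one_lt (u yh) (one_lt_two : (1:ℝ) < 2)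
    exact absurd (hbd n) (not_le.2 hn)
  -- convert the claim into the final bound
  have hRx : 0 < R - x := sub_pos.2 hx.2
  have h7 : (R - x) ^ γ' ≤ (Θ' * t) ^ γ' :=
    Real.rpow_le_rpow hRx.le hclaim hγ'.le
  have h8 : (Θ' * t) ^ γ' = Θ' ^ γ' * (u x)⁻¹ := by
    rw [Real.mul_rpow hΘ'.le ht0.le]
    congr 1
    rw [htdef, ← Real.rpow_mul hux0.le]
    have : ee * γ' = -1 := by
      rw [heedef]
      field_simp
    rw [this, Real.rpow_neg_one]
  have h9 : (R - x) ^ γ' * u x ≤ Θ' ^ γ' := by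
    have := mul_le_mul_of_nonneg_right (h7.trans_eq h8) hux0.le
    rwa [mul_assoc, inv_mul_cancel₀ (ne_of_gt hux0), mul_one] at this
  have hp1 : 0 < (R - x) ^ γ' := Real.rpow_pos_of_pos hRx _
  rw [Real.rpow_neg hRx.le, ← div_eq_mul_inv, ← hγ'def, le_div_iff₀ hp1, mul_comm]
  exact h9

set_option maxHeartbeats 1000000 in
lemma step_lemma {N : ℕ} (hN : 1 ≤ N) {a b δ μ t1 R : ℝ} (hδ : 0 < δ) (hμ : 0 < μ)
    (ht1 : 0 < t1) (ht1R : t1 < R)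
    {u v : ℝ → ℝ}
    (hu1 : ∀ r ∈ Ico t1 R, HasDerivAt u (deriv u r) r)
    (hv1 : ∀ r ∈ Ico t1 R, HasDerivAt v (deriv v r) r)
    (hφu : ∀ r ∈ Ico t1 R,
      HasDerivAt (fun x => x ^ (N - 1) * deriv u x) (r ^ (N - 1) * (r ^ a * v r ^ δ)) r)
    (hφv : ∀ r ∈ Ico t1 R,
      HasDerivAt (fun x => x ^ (N - 1) * deriv v x) (r ^ (N - 1) * (r ^ b * u r ^ μ)) r)
    (hφuc : ContinuousOn (fun x => x ^ (N - 1) * deriv u x) (Ico t1 R))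
    (hφvc : ContinuousOn (fun x => x ^ (N - 1) * deriv v x) (Ico t1 R))
    (hv0 : ∀ r ∈ Ico t1 R, 0 ≤ v r)
    (humono : MonotoneOn u (Ico t1 R))
    (hu'0 : ∀ r ∈ Ico t1 R, 0 ≤ deriv u r)
    (hv'0 : ∀ r ∈ Ico t1 R, 0 ≤ deriv v r)
    (hu1le : ∀ r ∈ Ico t1 R, 1 ≤ u r) :
    ∃ c > 0, ∀ x ∈ Ico t1 R, ∀ h : ℝ, 0 < h → x + h < R →
      u x + c * u x ^ (μ * δ) * h ^ (2 * δ + 2) ≤ u (x + h) := by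
  have hR0 : 0 < R := ht1.trans ht1R
  have hRN : (0:ℝ) < R ^ (N - 1) := pow_pos hR0 _
  obtain ⟨ma, hmadef⟩ : ∃ w : ℝ, w = t1 ^ (N - 1) * min (t1 ^ a) (R ^ a) := ⟨_, rfl⟩
  obtain ⟨mb, hmbdef⟩ : ∃ w : ℝ, w = t1 ^ (N - 1) * min (t1 ^ b) (R ^ b) := ⟨_, rfl⟩
  have hma : 0 < ma := by
    rw [hmadef]
    exact mul_pos (pow_pos ht1 _) (lt_min (Real.rpow_pos_of_pos ht1 _) (Real.rpow_pos_of_pos hR0 _))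
  have hmb : 0 < mb := by
    rw [hmbdef]
    exact mul_pos (pow_pos ht1 _) (lt_min (Real.rpow_pos_of_pos ht1 _) (Real.rpow_pos_of_pos hR0 _))
  -- lower bound for the coefficients
  have hcoefb : ∀ r ∈ Ico t1 R, ∀ (w : ℝ) (e : ℝ), w = t1 ^ (N - 1) * min (t1 ^ e) (R ^ e) →
      w ≤ r ^ (N - 1) * r ^ e := by
    intro r hr w e hw
    rw [hw]
    have h1 : t1 ^ (N - 1) ≤ r ^ (N - 1) := pow_le_pow_left₀ ht1.le hr.1 _
    have h2 : min (t1 ^ e) (R ^ e) ≤ r ^ e := rpow_lower_bound ht1 e hr.1 hr.2.le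
    exact mul_le_mul h1 h2
      (le_min (Real.rpow_nonneg ht1.le e) (Real.rpow_nonneg hR0.le e))
      (pow_nonneg (ht1.le.trans hr.1) _)
  obtain ⟨cst, hcstdef⟩ : ∃ w : ℝ,
      w = ma * (mb / (2 * R ^ (N - 1))) ^ δ / ((2 * δ + 1) * (2 * δ + 2) * R ^ (N - 1)) :=
    ⟨_, rfl⟩
  have hcst : 0 < cst := by
    rw [hcstdef]
    have h1 : (0:ℝ) < mb / (2 * R ^ (N - 1)) := by positivity
    have h2 : (0:ℝ) < (mb / (2 * R ^ (N - 1))) ^ δ := Real.rpow_pos_of_pos h1 δ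
    have h3 : (0:ℝ) < (2 * δ + 1) * (2 * δ + 2) * R ^ (N - 1) := by positivity
    positivity
  refine ⟨cst, hcst, ?_⟩
  intro x hx h hh hxhR
  have hxR : x < R := hx.2
  have hx0 : 0 < x := ht1.trans_le hx.1
  have hsub : Ico x R ⊆ Ico t1 R := Ico_subset_Ico_left hx.1
  have hsubo : Ioo x R ⊆ Ico t1 R := fun y hy => ⟨hx.1.trans hy.1.le, hy.2⟩
  have hu0 : 1 ≤ u x := hu1le x hx
  have hu0pos : 0 < u x := lt_of_lt_of_le one_pos hu0
  have huxmono : ∀ r ∈ Ico x R, u x ≤ u r := fun r hr =>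
    humono hx (hsub hr) hr.1
  -- (b) lower bound for ψ = φ_v
  obtain ⟨K0, hK0def⟩ : ∃ w : ℝ, w = mb * u x ^ μ := ⟨_, rfl⟩
  have hK0 : 0 < K0 := hK0def ▸ mul_pos hmb (Real.rpow_pos_of_pos hu0pos μ)
  have hψlow : ∀ r ∈ Ico x R, K0 * (r - x) ≤ x ^ (N - 1) * deriv v x
      + K0 * (r - x) := by
    intro r hr; nlinarith [mul_nonneg (pow_nonneg hx0.le (N-1)) (hv'0 x hx)]
  have hψlow2 : ∀ r ∈ Ico x R,
      x ^ (N - 1) * deriv v x + K0 * (r - x) ≤ r ^ (N - 1) * deriv v r := by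
    apply compare_helper (F := fun r => x ^ (N - 1) * deriv v x + K0 * (r - x))
      (G := fun x => x ^ (N - 1) * deriv v x)
      (F' := fun _ => K0) (G' := fun r => r ^ (N - 1) * (r ^ b * u r ^ μ))
      (by fun_prop) (hφvc.mono hsub)
      (fun r _ => by
        simpa using ((hasDerivAt_id r).sub_const x).const_mul K0 |>.const_add
          (x ^ (N - 1) * deriv v x))
      (fun r hr => hφv r (hsubo hr))
      ?_ (by simp)
    intro r hr
    have hrm := hsubo hr
    rw [hK0def]
    calc mb * u x ^ μ ≤ (r ^ (N - 1) * r ^ b) * u x ^ μ := by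
          apply mul_le_mul_of_nonneg_right (hcoefb r hrm mb b hmbdef)
            (Real.rpow_nonneg hu0pos.le μ)
      _ ≤ (r ^ (N - 1) * r ^ b) * u r ^ μ := by
          apply mul_le_mul_of_nonneg_left
            (Real.rpow_le_rpow hu0pos.le (huxmono r ⟨hr.1.le, hr.2⟩) hμ.le)
            (mul_nonneg (pow_nonneg (ht1.le.trans hrm.1) _)
              (Real.rpow_nonneg (ht1.le.trans hrm.1) b))
      _ = r ^ (N - 1) * (r ^ b * u r ^ μ) := by ring
  -- (c)-(d) lower bound for v
  obtain ⟨K1, hK1def⟩ : ∃ w : ℝ, w = K0 / R ^ (N - 1) := ⟨_, rfl⟩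
  have hK1 : 0 < K1 := hK1def ▸ div_pos hK0 hRN
  have hv'low : ∀ r ∈ Ico x R, K1 * (r - x) ≤ deriv v r := by
    intro r hr
    have hr0 : 0 < r := hx0.trans_le hr.1
    have hrN : (0:ℝ) < r ^ (N - 1) := pow_pos hr0 _
    have h2 := le_trans (hψlow r hr) (hψlow2 r hr)
    have h3 : K0 * (r - x) / R ^ (N - 1) ≤ r ^ (N - 1) * deriv v r / r ^ (N - 1) := by
      apply div_le_div₀ (mul_nonneg (pow_nonneg hr0.le _) (hv'0 r (hsub hr))) h2 hrN
        (pow_le_pow_left₀ hr0.le hr.2.le _)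
    have h4 : r ^ (N - 1) * deriv v r / r ^ (N - 1) = deriv v r := by
      field_simp
    rw [h4] at h3
    calc K1 * (r - x) = K0 * (r - x) / R ^ (N - 1) := by rw [hK1def]; ring
      _ ≤ deriv v r := h3
  have hvlow : ∀ r ∈ Ico x R, K1 / 2 * (r - x) ^ (2:ℕ) ≤ v r := by
    apply compare_helper (F := fun r => K1 / 2 * (r - x) ^ (2:ℕ)) (G := v)
      (F' := fun r => K1 * (r - x)) (G' := fun r => deriv v r)
      (by fun_prop)
      (fun r hr => ((hv1 r (hsub hr)).continuousAt).continuousWithinAt)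
      ?_
      (fun r hr => hv1 r (hsubo hr))
      (fun r hr => hv'low r ⟨hr.1.le, hr.2⟩)
      (by simpa using hv0 x hx)
    intro r _
    have h0 := (((hasDerivAt_id r).sub_const x).pow 2).const_mul (K1 / 2)
    refine h0.congr_deriv ?_
    push_cast [id_eq]
    ring
  -- (f) lower bound for φ_u
  obtain ⟨K2, hK2def⟩ : ∃ w : ℝ, w = ma * (K1 / 2) ^ δ := ⟨_, rfl⟩
  have hK2 : 0 < K2 := hK2def ▸ mul_pos hma (Real.rpow_pos_of_pos (by positivity) δ)
  have hφulow : ∀ r ∈ Ico x R,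
      K2 / (2 * δ + 1) * (r - x) ^ (2 * δ + 1) ≤ r ^ (N - 1) * deriv u r := by
    apply compare_helper (F := fun r => K2 / (2 * δ + 1) * (r - x) ^ (2 * δ + 1))
      (G := fun x => x ^ (N - 1) * deriv u x)
      (F' := fun r => K2 * (r - x) ^ (2 * δ)) (G' := fun r => r ^ (N - 1) * (r ^ a * v r ^ δ))
      ?_ (hφuc.mono hsub)
      ?_
      (fun r hr => hφu r (hsubo hr))
      ?_
      (by
        simp only [sub_self, Real.zero_rpow (show 2 * δ + 1 ≠ 0 by positivity), mul_zero]
        exact mul_nonneg (pow_nonneg hx0.le _) (hu'0 x hx))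
    · -- continuity of F
      apply ContinuousOn.mul continuousOn_const
      apply ContinuousOn.rpow_const (by fun_prop)
      intro r _
      right
      positivity
    · -- derivative of F
      intro r _
      have h0 := (((hasDerivAt_id r).sub_const x).rpow_const
        (p := 2 * δ + 1) (Or.inr (by linarith))).const_mul (K2 / (2 * δ + 1))
      refine h0.congr_deriv ?_
      have he : 2 * δ + 1 - 1 = 2 * δ := by ring
      rw [he, id_eq]
      field_simp
    · -- derivative comparison
      intro r hr
      have hrm := hsubo hr
      have hrx : (0:ℝ) ≤ r - x := by linarith [hr.1]
      have hvr : K1 / 2 * (r - x) ^ (2:ℕ) ≤ v r := hvlow r ⟨hr.1.le, hr.2⟩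
      have hvr0 : (0:ℝ) ≤ K1 / 2 * (r - x) ^ (2:ℕ) := by positivity
      have h5 : (K1 / 2 * (r - x) ^ (2:ℕ)) ^ δ ≤ v r ^ δ :=
        Real.rpow_le_rpow hvr0 hvr hδ.le
      have h6 : (K1 / 2 * (r - x) ^ (2:ℕ)) ^ δ = (K1 / 2) ^ δ * (r - x) ^ (2 * δ) := by
        rw [Real.mul_rpow (by positivity) (by positivity)]
        congr 1
        rw [← Real.rpow_natCast (r - x) 2, ← Real.rpow_mul hrx]
        norm_num
      calc K2 * (r - x) ^ (2 * δ) = ma * ((K1 / 2) ^ δ * (r - x) ^ (2 * δ)) := by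
            rw [hK2def]; ring
        _ ≤ (r ^ (N - 1) * r ^ a) * ((K1 / 2) ^ δ * (r - x) ^ (2 * δ)) := by
            apply mul_le_mul_of_nonneg_right (hcoefb r hrm ma a hmadef)
            positivity
        _ = (r ^ (N - 1) * r ^ a) * (K1 / 2 * (r - x) ^ (2:ℕ)) ^ δ := by rw [h6]
        _ ≤ (r ^ (N - 1) * r ^ a) * v r ^ δ := by
            apply mul_le_mul_of_nonneg_left h5
            have : (0:ℝ) < r := hx0.trans_le hr.1.le
            positivity
        _ = r ^ (N - 1) * (r ^ a * v r ^ δ) := by ring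
  -- (g)-(h) conclusion
  obtain ⟨K3, hK3def⟩ : ∃ w : ℝ, w = K2 / ((2 * δ + 1) * R ^ (N - 1)) := ⟨_, rfl⟩
  have hK3 : 0 < K3 := hK3def ▸ div_pos hK2 (by positivity)
  have hu'low : ∀ r ∈ Ico x R, K3 * (r - x) ^ (2 * δ + 1) ≤ deriv u r := by
    intro r hr
    have hr0 : 0 < r := hx0.trans_le hr.1
    have hrN : (0:ℝ) < r ^ (N - 1) := pow_pos hr0 _
    have hrx : (0:ℝ) ≤ r - x := by linarith [hr.1]
    have h2 := hφulow r hr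
    have h3 : K2 / (2 * δ + 1) * (r - x) ^ (2 * δ + 1) / R ^ (N - 1)
        ≤ r ^ (N - 1) * deriv u r / r ^ (N - 1) := by
      apply div_le_div₀ (mul_nonneg (pow_nonneg hr0.le _) (hu'0 r (hsub hr))) h2 hrN
        (pow_le_pow_left₀ hr0.le hr.2.le _)
    have h4 : r ^ (N - 1) * deriv u r / r ^ (N - 1) = deriv u r := by
      field_simp
    rw [h4] at h3
    calc K3 * (r - x) ^ (2 * δ + 1)
        = K2 / (2 * δ + 1) * (r - x) ^ (2 * δ + 1) / R ^ (N - 1) := by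
          rw [hK3def]; field_simp
      _ ≤ deriv u r := h3
  have hfinal : ∀ r ∈ Ico x R,
      u x + K3 / (2 * δ + 2) * (r - x) ^ (2 * δ + 2) ≤ u r := by
    apply compare_helper (F := fun r => u x + K3 / (2 * δ + 2) * (r - x) ^ (2 * δ + 2))
      (G := u) (F' := fun r => K3 * (r - x) ^ (2 * δ + 1)) (G' := fun r => deriv u r)
      ?_
      (fun r hr => ((hu1 r (hsub hr)).continuousAt).continuousWithinAt)
      ?_
      (fun r hr => hu1 r (hsubo hr))
      (fun r hr => hu'low r ⟨hr.1.le, hr.2⟩)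
      (by
        simp only [sub_self, Real.zero_rpow (show 2 * δ + 2 ≠ 0 by positivity), mul_zero,
          add_zero]
        exact le_refl _)
    · apply ContinuousOn.add continuousOn_const
      apply ContinuousOn.mul continuousOn_const
      apply ContinuousOn.rpow_const (by fun_prop)
      intro r _
      right
      positivity
    · intro r _
      have h0 := (((hasDerivAt_id r).sub_const x).rpow_const
        (p := 2 * δ + 2) (Or.inr (by linarith))).const_mul (K3 / (2 * δ + 2))
      have h1 := h0.const_add (u x)
      refine h1.congr_deriv ?_
      have he : 2 * δ + 2 - 1 = 2 * δ + 1 := by ring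
      rw [he, id_eq]
      field_simp
  -- put the constants together
  have hmain := hfinal (x + h) ⟨by linarith, hxhR⟩
  have hsimp : x + h - x = h := by ring
  rw [hsimp] at hmain
  refine le_trans ?_ hmain
  have hKeq : cst * u x ^ (μ * δ) ≤ K3 / (2 * δ + 2) := by
    have hK1eq : K1 / 2 = mb / (2 * R ^ (N - 1)) * u x ^ μ := by
      rw [hK1def, hK0def]; ring
    have hK2eq : K2 = ma * ((mb / (2 * R ^ (N - 1))) ^ δ * u x ^ (μ * δ)) := by
      rw [hK2def, hK1eq, Real.mul_rpow (by positivity) (Real.rpow_nonneg hu0pos.le μ),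
        ← Real.rpow_mul hu0pos.le]
    have : K3 / (2 * δ + 2) = cst * u x ^ (μ * δ) := by
      rw [hK3def, hK2eq, hcstdef]
      field_simp
    rw [this]
  have hpow : (0:ℝ) ≤ h ^ (2 * δ + 2) := Real.rpow_nonneg hh.le _
  nlinarith [mul_le_mul_of_nonneg_right hKeq hpow]

set_option maxHeartbeats 1000000 in
lemma main_half (N : ℕ) (hN : 1 ≤ N) (a b δ μ : ℝ)
    (hδ : 0 < δ) (hμ : 0 < μ) (hD : 1 < μ * δ)
    (r0 R : ℝ) (hr0 : 0 ≤ r0) (hr0R : r0 < R)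
    (u v : ℝ → ℝ)
    (hsol : RadialSystem N a b δ μ u v (Ioo r0 R))
    (hnonneg : ∀ r ∈ Ioo r0 R, 0 ≤ u r ∧ 0 ≤ v r)
    (hunb : ∀ ρ ∈ Ioo r0 R, ¬ (BddAbove (u '' Ioo ρ R) ∧ BddAbove (v '' Ioo ρ R))) :
    Tendsto u (𝓝[<] R) atTop ∧ Tendsto (deriv u) (𝓝[<] R) atTop ∧
    ∃ C > 0, ∃ ρ ∈ Ioo r0 R, ∀ r ∈ Ioo ρ R,
      u r ≤ C * (R - r) ^ (-((2 * δ + 2) / (μ * δ - 1))) := by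
  obtain ⟨hu2, hv2, heq⟩ := hsol
  obtain ⟨hu1d, hu2d, hu'c⟩ := contDiffOn_facts isOpen_Ioo hu2
  obtain ⟨hv1d, hv2d, hv'c⟩ := contDiffOn_facts isOpen_Ioo hv2
  have hequ : ∀ r ∈ Ioo r0 R,
      deriv (deriv u) r + (((N : ℝ) - 1) / r) * deriv u r = r ^ a * v r ^ δ :=
    fun r hr => (heq r hr).1
  have heqv : ∀ r ∈ Ioo r0 R,
      deriv (deriv v) r + (((N : ℝ) - 1) / r) * deriv v r = r ^ b * u r ^ μ :=
    fun r hr => (heq r hr).2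
  have hu0 : ∀ r ∈ Ioo r0 R, 0 ≤ u r := fun r hr => (hnonneg r hr).1
  have hv0 : ∀ r ∈ Ioo r0 R, 0 ≤ v r := fun r hr => (hnonneg r hr).2
  have hpos : ∀ r ∈ Ioo r0 R, (0:ℝ) < r := fun r hr => lt_of_le_of_lt hr0 hr.1
  have hR0 : 0 < R := (hpos ((r0 + R)/2) ⟨by linarith, by linarith⟩).trans (by linarith)
  -- unboundedness of u and of v on every left neighbourhood
  have hUu : ∀ s ∈ Ioo r0 R, ¬ BddAbove (u '' Ioo s R) := by
    intro s hs hbdd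
    exact hunb s hs ⟨hbdd, bdd_transfer hN hμ hr0 hv1d hv2d heqv hv'c hu0 hs hbdd⟩
  have hUv : ∀ s ∈ Ioo r0 R, ¬ BddAbove (v '' Ioo s R) := by
    intro s hs hbdd
    exact hunb s hs ⟨bdd_transfer hN hδ hr0 hu1d hu2d hequ hu'c hv0 hs hbdd, hbdd⟩
  -- eventual monotonicity
  obtain ⟨su, hsuI, hφupos, hu'pos, humono, hφumono⟩ :=
    eventual_incr hN hδ hr0 hr0R hu1d hu2d hequ hu'c hv0 hUu
  obtain ⟨sv, hsvI, hφvpos, hv'pos, hvmono, hφvmono⟩ :=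
    eventual_incr hN hμ hr0 hr0R hv1d hv2d heqv hv'c hu0 hUv
  have hsuR : su < R := hsuI.2
  have hsvR : sv < R := hsvI.2
  -- limit of u
  have hTu : Tendsto u (𝓝[<] R) atTop := tendsto_of_mono_unbdd hsuR humono (hUu su hsuI)
  -- the function φu tends to infinity as well
  have hsu0 : 0 < su := hpos su hsuI
  have hsubu : Ico su R ⊆ Ioo r0 R := fun y hy => ⟨lt_of_lt_of_le hsuI.1 hy.1, hy.2⟩
  have hφuUnb : ¬ BddAbove ((fun x => x ^ (N - 1) * deriv u x) '' Ioo su R) := by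
    intro ⟨L, hL⟩
    have hL' : ∀ r ∈ Ioo su R, (fun x => x ^ (N - 1) * deriv u x) r ≤ L :=
      fun r hr => hL (mem_image_of_mem _ hr)
    have hCg : ∀ r ∈ Ioo su R, deriv u r ≤ max L 0 / su ^ (N - 1) := by
      intro r hr
      have hr0' : 0 < r := hsu0.trans hr.1
      have hrN : (0:ℝ) < r ^ (N - 1) := pow_pos hr0' _
      have hsN : (0:ℝ) < su ^ (N - 1) := pow_pos hsu0 _
      have h2 : r ^ (N - 1) * deriv u r ≤ max L 0 := le_trans (hL' r hr) (le_max_left _ _)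
      have h3 : deriv u r = r ^ (N - 1) * deriv u r / r ^ (N - 1) := by field_simp
      rw [h3]
      calc r ^ (N - 1) * deriv u r / r ^ (N - 1) ≤ max L 0 / r ^ (N - 1) := by
            gcongr
        _ ≤ max L 0 / su ^ (N - 1) := by
            apply div_le_div_of_nonneg_left (le_max_right _ _) hsN
            exact pow_le_pow_left₀ hsu0.le hr.1.le _
      done
    -- then u is bounded above, contradiction
    have hbd := compare_helper (F := u)
      (G := fun x => u su + (max L 0 / su ^ (N - 1)) * (x - su))
      (F' := fun r => deriv u r) (G' := fun _ => max L 0 / su ^ (N - 1))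
      (fun r hr => ((hu1d r (hsubu hr)).continuousAt).continuousWithinAt)
      (by fun_prop)
      (fun r hr => hu1d r (hsubu ⟨hr.1.le, hr.2⟩))
      (fun r _ => by
        simpa using ((hasDerivAt_id r).sub_const su).const_mul (max L 0 / su ^ (N - 1))
          |>.const_add (u su))
      (fun r hr => hCg r hr) (by simp)
    apply hUu su hsuI
    refine ⟨u su + (max L 0 / su ^ (N - 1)) * (R - su), ?_⟩
    rintro y ⟨r, hr, rfl⟩
    refine le_trans (hbd r ⟨hr.1.le, hr.2⟩) ?_
    have h5 : r - su ≤ R - su := by linarith [hr.2]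
    have h6 : (0:ℝ) ≤ max L 0 / su ^ (N - 1) := div_nonneg (le_max_right _ _)
      (pow_nonneg hsu0.le _)
    nlinarith
  have hφuT : Tendsto (fun x => x ^ (N - 1) * deriv u x) (𝓝[<] R) atTop :=
    tendsto_of_mono_unbdd hsuR hφumono hφuUnb
  have hTu' : Tendsto (deriv u) (𝓝[<] R) atTop := by
    apply tendsto_atTop_mono' (𝓝[<] R)
      (f₁ := fun x => (x ^ (N - 1) * deriv u x) * (R ^ (N - 1))⁻¹)
    · filter_upwards [Ioo_mem_nhdsLT hsuR] with r hr
      have hr0' : 0 < r := hsu0.trans hr.1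
      have hRN : (0:ℝ) < R ^ (N - 1) := pow_pos hR0 _
      have hd0 : 0 < deriv u r := hu'pos r ⟨hr.1.le, hr.2⟩
      show r ^ (N - 1) * deriv u r * (R ^ (N - 1))⁻¹ ≤ deriv u r
      rw [← div_eq_mul_inv, div_le_iff₀ hRN]
      nlinarith [mul_le_mul_of_nonneg_right
        (pow_le_pow_left₀ hr0'.le hr.2.le (N - 1)) hd0.le]
    · exact hφuT.atTop_mul_const (inv_pos.2 (pow_pos hR0 _))
  refine ⟨hTu, hTu', ?_⟩
  -- choose the base point t1
  obtain ⟨yu, hyumem, hyu⟩ : ∃ y ∈ u '' Ioo su R, (1:ℝ) < y := by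
    have := hUu su hsuI
    rw [not_bddAbove_iff] at this
    exact this 1
  obtain ⟨xu, hxu, rfl⟩ := hyumem
  obtain ⟨yv, hyvmem, hyv⟩ : ∃ y ∈ v '' Ioo sv R, (1:ℝ) < y := by
    have := hUv sv hsvI
    rw [not_bddAbove_iff] at this
    exact this 1
  obtain ⟨xv, hxv, rfl⟩ := hyvmem
  obtain ⟨t1, ht1def⟩ : ∃ w : ℝ, w = max xu xv := ⟨_, rfl⟩
  have hxuI : xu ∈ Ioo r0 R := ⟨lt_trans hsuI.1 hxu.1, hxu.2⟩
  have hxvI : xv ∈ Ioo r0 R := ⟨lt_trans hsvI.1 hxv.1, hxv.2⟩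
  have ht1I : t1 ∈ Ioo r0 R := by
    rw [ht1def]
    rcases max_cases xu xv with ⟨h1, _⟩ | ⟨h1, _⟩ <;> rw [h1]
    exacts [hxuI, hxvI]
  have ht1R : t1 < R := ht1I.2
  have ht10 : 0 < t1 := hpos t1 ht1I
  have hsubt1u : Ico t1 R ⊆ Ico su R :=
    Ico_subset_Ico_left (by rw [ht1def]; exact le_trans hxu.1.le (le_max_left _ _))
  have hsubt1v : Ico t1 R ⊆ Ico sv R :=
    Ico_subset_Ico_left (by rw [ht1def]; exact le_trans hxv.1.le (le_max_right _ _))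
  have hsubt1 : Ico t1 R ⊆ Ioo r0 R := fun y hy => ⟨lt_of_lt_of_le ht1I.1 hy.1, hy.2⟩
  have hxut1 : xu ≤ t1 := by rw [ht1def]; exact le_max_left _ _
  have hxvt1 : xv ≤ t1 := by rw [ht1def]; exact le_max_right _ _
  have hu1le : ∀ r ∈ Ico t1 R, 1 ≤ u r := by
    intro r hr
    exact le_trans hyu.le (humono ⟨hxu.1.le, hxu.2⟩ (hsubt1u hr) (le_trans hxut1 hr.1))
  have hv1le : ∀ r ∈ Ico t1 R, 1 ≤ v r := by
    intro r hr
    exact le_trans hyv.le (hvmono ⟨hxv.1.le, hxv.2⟩ (hsubt1v hr) (le_trans hxvt1 hr.1))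
  -- the derivative formulation of the system on Ico t1 R
  have hφud : ∀ r ∈ Ico t1 R,
      HasDerivAt (fun x => x ^ (N - 1) * deriv u x) (r ^ (N - 1) * (r ^ a * v r ^ δ)) r := by
    intro r hr
    have h0 := phi_hasDerivAt hN (hpos r (hsubt1 hr)) (hu2d r (hsubt1 hr))
    rwa [hequ r (hsubt1 hr)] at h0
  have hφvd : ∀ r ∈ Ico t1 R,
      HasDerivAt (fun x => x ^ (N - 1) * deriv v x) (r ^ (N - 1) * (r ^ b * u r ^ μ)) r := by
    intro r hr
    have h0 := phi_hasDerivAt hN (hpos r (hsubt1 hr)) (hv2d r (hsubt1 hr))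
    rwa [heqv r (hsubt1 hr)] at h0
  obtain ⟨cst, hcst, hstep⟩ := step_lemma hN hδ hμ ht10 ht1R
    (fun r hr => hu1d r (hsubt1 hr)) (fun r hr => hv1d r (hsubt1 hr))
    hφud hφvd
    (((continuous_pow (N - 1)).continuousOn).mul (hu'c.mono hsubt1))
    (((continuous_pow (N - 1)).continuousOn).mul (hv'c.mono hsubt1))
    (fun r hr => hv0 r (hsubt1 hr))
    (humono.mono hsubt1u)
    (fun r hr => (hu'pos r (hsubt1u hr)).le)
    (fun r hr => (hv'pos r (hsubt1v hr)).le)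
    hu1le
  obtain ⟨C, hC, hbound⟩ := iterate_lemma ht1R hcst hD (by positivity)
    (humono.mono hsubt1u) hu1le hstep
  exact ⟨C, hC, t1, ht1I, fun r hr => hbound r ⟨hr.1.le, hr.2⟩⟩

theorem stmt6 (N : ℕ) (hN : 1 ≤ N) (a b δ μ D γ ξ : ℝ)
    (ha : max (-2 : ℝ) (-(N : ℝ)) < a) (hb : max (-2 : ℝ) (-(N : ℝ)) < b)
    (hδ : 0 < δ) (hμ : 0 < μ)
    (hD : D = μ * δ - 1) (hDpos : 0 < D)
    (hγ : γ = 2 * (1 + δ) / D) (hξ : ξ = 2 * (1 + μ) / D)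
    (r0 R : ℝ) (hr0 : 0 ≤ r0) (hr0R : r0 < R)
    (u v : ℝ → ℝ)
    (hsol : RadialSystem N a b δ μ u v (Ioo r0 R))
    (hnonneg : ∀ r ∈ Ioo r0 R, 0 ≤ u r ∧ 0 ≤ v r)
    (hunb : ∀ ρ ∈ Ioo r0 R, ¬ (BddAbove (u '' Ioo ρ R) ∧ BddAbove (v '' Ioo ρ R))) :
    Tendsto u (nhdsWithin R (Iio R)) atTop ∧
    Tendsto v (nhdsWithin R (Iio R)) atTop ∧
    Tendsto (deriv u) (nhdsWithin R (Iio R)) atTop ∧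
    Tendsto (deriv v) (nhdsWithin R (Iio R)) atTop ∧
    ∃ C > 0, ∃ ρ ∈ Ioo r0 R, ∀ r ∈ Ioo ρ R,
      u r ≤ C * (R - r) ^ (-γ) ∧ v r ≤ C * (R - r) ^ (-ξ) := by
  have hμδ : 1 < μ * δ := by rw [hD] at hDpos; linarith
  have hδμ : 1 < δ * μ := by rw [mul_comm]; exact hμδ
  obtain ⟨Tu, Tu', Cu, hCu, ρu, hρu, hbu⟩ :=
    main_half N hN a b δ μ hδ hμ hμδ r0 R hr0 hr0R u v hsol hnonneg hunb
  have hsol' : RadialSystem N b a μ δ v u (Ioo r0 R) :=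
    ⟨hsol.2.1, hsol.1, fun r hr => ⟨(hsol.2.2 r hr).2, (hsol.2.2 r hr).1⟩⟩
  obtain ⟨Tv, Tv', Cv, hCv, ρv, hρv, hbv⟩ :=
    main_half N hN b a μ δ hμ hδ hδμ r0 R hr0 hr0R v u hsol'
      (fun r hr => ⟨(hnonneg r hr).2, (hnonneg r hr).1⟩)
      (fun ρ hρ hcon => hunb ρ hρ ⟨hcon.2, hcon.1⟩)
  refine ⟨Tu, Tv, Tu', Tv', max Cu Cv, lt_max_of_lt_left hCu, max ρu ρv,
    ⟨lt_max_of_lt_left hρu.1, max_lt hρu.2 hρv.2⟩, ?_⟩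
  intro r hr
  have hru : r ∈ Ioo ρu R := ⟨lt_of_le_of_lt (le_max_left _ _) hr.1, hr.2⟩
  have hrv : r ∈ Ioo ρv R := ⟨lt_of_le_of_lt (le_max_right _ _) hr.1, hr.2⟩
  have hRr : (0:ℝ) ≤ R - r := by linarith [hr.2]
  constructor
  · have h1 := hbu r hru
    have hexp : -((2 * δ + 2) / (μ * δ - 1)) = -γ := by rw [hγ, hD]; ring
    rw [hexp] at h1
    refine le_trans h1 (mul_le_mul_of_nonneg_right (le_max_left _ _)
      (Real.rpow_nonneg hRr _))
  · have h1 := hbv r hrv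
    have hexp : -((2 * μ + 2) / (δ * μ - 1)) = -ξ := by rw [hξ, hD]; ring
    rw [hexp] at h1
    refine le_trans h1 (mul_le_mul_of_nonneg_right (le_max_right _ _)
      (Real.rpow_nonneg hRr _))
end

section
/- Let (u, v) be a nonnegative solution of the radial system (S) on (r0, 1) with u, v, u', v' > 0 on (r0, 1). With the notations r(t), s = e^t, F, G, X, Y, Z, W of the context, the functions X, Y, Z, W are well defined on (−∞, t0) for suitable t0 and satisfy there: X_t = X(X + 1 + Z), Y_t = Y(Y + 1 + W), Z_t = Z(1 − δY − Z − α(t)), W_t = W(1 − μX − W − β(t)), where α(t) = (2N−2+a)e^t/(1+(N−2)e^t) and β(t) = (2N−2+b)e^t/(1+(N−2)e^t). Moreover u and v are recovered by u(r(t)) = s^{−γ}·F^{−1/D}·G^{−δ/D}·(|Z|X)^{1/D}·(|W|Y)^{δ/D} and v(r(t)) = s^{−ξ}·F^{−μ/D}·G^{−1/D}·(|W|Y)^{1/D}·(|Z|X)^{μ/D}. -/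
open Real Set Filter

/-- `Ψ(s) = (1+(N-2)s)^(-1/(N-2))` if `N ≠ 2`, and `Ψ(s) = e^(-s)` if `N = 2`. -/
noncomputable def PsiF (N : ℕ) (s : ℝ) : ℝ :=
  if N = 2 then Real.exp (-s) else (1 + ((N : ℝ) - 2) * s) ^ (-(1 / ((N : ℝ) - 2)))

/-- `r(t) = Ψ(e^t)`. -/
noncomputable def rF (N : ℕ) (t : ℝ) : ℝ := PsiF N (Real.exp t)

/-- `X(t) = s·r^(N-1)·u'(r)/u(r)` at `r = r(t)`, `s = e^t`. -/
noncomputable def XF (N : ℕ) (u : ℝ → ℝ) (t : ℝ) : ℝ :=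
  Real.exp t * rF N t ^ ((N : ℝ) - 1) * deriv u (rF N t) / u (rF N t)

/-- `Y(t) = s·r^(N-1)·v'(r)/v(r)` at `r = r(t)`, `s = e^t`. -/
noncomputable def YF (N : ℕ) (v : ℝ → ℝ) (t : ℝ) : ℝ :=
  Real.exp t * rF N t ^ ((N : ℝ) - 1) * deriv v (rF N t) / v (rF N t)

/-- `Z(t) = -s·r^(N-1+a)·v(r)^δ/u'(r)` at `r = r(t)`, `s = e^t`. -/
noncomputable def ZF (N : ℕ) (a δ : ℝ) (u v : ℝ → ℝ) (t : ℝ) : ℝ :=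
  -(Real.exp t * rF N t ^ ((N : ℝ) - 1 + a) * v (rF N t) ^ δ / deriv u (rF N t))

/-- `W(t) = -s·r^(N-1+b)·u(r)^μ/v'(r)` at `r = r(t)`, `s = e^t`. -/
noncomputable def WF (N : ℕ) (b μ : ℝ) (u v : ℝ → ℝ) (t : ℝ) : ℝ :=
  -(Real.exp t * rF N t ^ ((N : ℝ) - 1 + b) * u (rF N t) ^ μ / deriv v (rF N t))

lemma rF_def_ne (N : ℕ) (hN2 : N ≠ 2) (t : ℝ) :
    rF N t = (1 + ((N:ℝ)-2) * Real.exp t) ^ (-(1/((N:ℝ)-2))) := by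
  simp [rF, PsiF, hN2]

lemma rF_one (t : ℝ) : rF 1 t = 1 - Real.exp t := by
  rw [rF_def_ne 1 (by norm_num)]
  norm_num
  rw [show (1:ℝ) + -rexp t = 1 - rexp t by ring]

lemma rF_two (t : ℝ) : rF 2 t = Real.exp (-Real.exp t) := by simp [rF, PsiF]

lemma rF_lt_one (N : ℕ) (hN : 1 ≤ N) (t : ℝ) : rF N t < 1 := by
  have hcase : N = 1 ∨ N = 2 ∨ 3 ≤ N := by omega
  rcases hcase with h1 | h2 | h3
  · subst h1; rw [rF_one]; linarith [Real.exp_pos t]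
  · subst h2; rw [rF_two]
    have : -Real.exp t < 0 := by linarith [Real.exp_pos t]
    calc Real.exp (-Real.exp t) < Real.exp 0 := Real.exp_lt_exp.2 this
    _ = 1 := Real.exp_zero
  · rw [rF_def_ne N (by omega)]
    have hc : (1:ℝ) ≤ (N:ℝ) - 2 := by
      have : (3:ℝ) ≤ (N:ℝ) := by exact_mod_cast h3
      linarith
    apply Real.rpow_lt_one_of_one_lt_of_neg
    · nlinarith [Real.exp_pos t]
    · have : (0:ℝ) < 1/((N:ℝ)-2) := by positivity
      linarith

lemma rF_aux (N : ℕ) (hN : 1 ≤ N) (t : ℝ) (hr : 0 < rF N t) :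
    0 < 1 + ((N:ℝ)-2) * Real.exp t ∧
    rF N t ^ ((N:ℝ)-2) = (1 + ((N:ℝ)-2) * Real.exp t)⁻¹ := by
  have hcase : N = 1 ∨ N = 2 ∨ 3 ≤ N := by omega
  rcases hcase with h1 | h2 | h3
  · subst h1
    rw [show (1:ℝ) + (((1:ℕ):ℝ)-2) * Real.exp t = 1 - rexp t by push_cast; ring]
    have hr' : 0 < 1 - Real.exp t := by rw [← rF_one]; exact hr
    constructor
    · exact hr'
    · rw [rF_one, show (((1:ℕ):ℝ)-2) = -1 by norm_num, Real.rpow_neg_one]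
  · subst h2
    norm_num
  · have hc : (1:ℝ) ≤ (N:ℝ) - 2 := by
      have : (3:ℝ) ≤ (N:ℝ) := by exact_mod_cast h3
      linarith
    have hA : 0 < 1 + ((N:ℝ)-2) * Real.exp t := by nlinarith [Real.exp_pos t]
    refine ⟨hA, ?_⟩
    rw [rF_def_ne N (by omega), ← Real.rpow_mul hA.le,
      show -(1/((N:ℝ)-2)) * ((N:ℝ)-2) = -1 by field_simp, Real.rpow_neg_one]

lemma rF_tendsto (N : ℕ) : Tendsto (rF N) atBot (nhds 1) := by
  have h0 : Tendsto Real.exp atBot (nhds 0) := Real.tendsto_exp_atBot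
  by_cases hN2 : N = 2
  · subst hN2
    have hc : ContinuousAt (fun s : ℝ => Real.exp (-s)) 0 :=
      (Real.continuous_exp.comp continuous_neg).continuousAt
    have := hc.tendsto.comp h0
    rw [show rF 2 = (fun s : ℝ => Real.exp (-s)) ∘ Real.exp from funext rF_two]
    simpa using this
  · have hc : ContinuousAt (fun s : ℝ => (1 + ((N:ℝ)-2)*s) ^ (-(1/((N:ℝ)-2)))) 0 := by
      apply ContinuousAt.rpow_const
      · fun_prop
      · left; norm_num
    have h2 := hc.tendsto.comp h0
    have heq : (fun s : ℝ => (1 + ((N:ℝ)-2)*s) ^ (-(1/((N:ℝ)-2)))) ∘ Real.exp = rF N := by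
      funext t; simp [rF, PsiF, hN2, Function.comp]
    rw [heq] at h2
    simpa using h2

lemma hasDerivAt_rF (N : ℕ) (hN : 1 ≤ N) (t : ℝ) :
    HasDerivAt (rF N) (-(Real.exp t * rF N t ^ ((N:ℝ)-1))) t := by
  have hcase : N = 1 ∨ N = 2 ∨ 3 ≤ N := by omega
  rcases hcase with h1 | h2 | h3
  · subst h1
    have heq : rF 1 = fun t => 1 - Real.exp t := funext rF_one
    rw [heq]
    have h : HasDerivAt (fun t : ℝ => 1 - Real.exp t) (-Real.exp t) t :=
      (Real.hasDerivAt_exp t).const_sub 1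
    convert h using 1
    simp only []
    rw [show (((1:ℕ):ℝ)-1) = 0 by norm_num, Real.rpow_zero]; ring
  · subst h2
    have heq : rF 2 = fun t => Real.exp (-Real.exp t) := funext rF_two
    rw [heq]
    have h : HasDerivAt (fun t : ℝ => Real.exp (-Real.exp t))
        (Real.exp (-Real.exp t) * (-Real.exp t)) t := ((Real.hasDerivAt_exp t).neg).exp
    convert h using 1
    simp only []
    rw [show (((2:ℕ):ℝ)-1) = 1 by norm_num, Real.rpow_one]; ring
  · have hN2 : N ≠ 2 := by omega
    have hc : (1:ℝ) ≤ (N:ℝ) - 2 := by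
      have : (3:ℝ) ≤ (N:ℝ) := by exact_mod_cast h3
      linarith
    have hc0 : (N:ℝ) - 2 ≠ 0 := by linarith
    have hA : 0 < 1 + ((N:ℝ)-2) * Real.exp t := by nlinarith [Real.exp_pos t]
    have hB : HasDerivAt (fun t : ℝ => 1 + ((N:ℝ)-2) * Real.exp t)
        (((N:ℝ)-2) * Real.exp t) t :=
      ((Real.hasDerivAt_exp t).const_mul ((N:ℝ)-2)).const_add 1
    have H := hB.rpow_const (p := -(1/((N:ℝ)-2))) (Or.inl hA.ne')
    have heq : rF N = fun t => (1 + ((N:ℝ)-2) * Real.exp t) ^ (-(1/((N:ℝ)-2))) :=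
      funext (rF_def_ne N hN2)
    rw [heq]
    convert H using 1
    simp only []
    rw [← Real.rpow_mul hA.le,
      show -(1/((N:ℝ)-2)) * ((N:ℝ)-1) = -(1/((N:ℝ)-2)) - 1 by field_simp; ring]
    field_simp

lemma aux_X (N : ℕ) (hN : 1 ≤ N) (a δ : ℝ) (u v : ℝ → ℝ) (t : ℝ)
    (hr : 0 < rF N t)
    (hu1 : HasDerivAt u (deriv u (rF N t)) (rF N t))
    (hu2 : HasDerivAt (deriv u) (deriv (deriv u) (rF N t)) (rF N t))
    (hU : 0 < u (rF N t)) (hU' : deriv u (rF N t) ≠ 0)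
    (hode : deriv (deriv u) (rF N t) + (((N:ℝ)-1)/(rF N t)) * deriv u (rF N t)
      = rF N t ^ a * v (rF N t) ^ δ) :
    deriv (XF N u) t = XF N u t * (XF N u t + 1 + ZF N a δ u v t) := by
  obtain ⟨hA, hQ⟩ := rF_aux N hN t hr
  have hP : rF N t ^ ((N:ℝ)-1) = (1 + ((N:ℝ)-2) * Real.exp t)⁻¹ * rF N t := by
    rw [show (N:ℝ)-1 = ((N:ℝ)-2) + 1 by ring, Real.rpow_add hr, Real.rpow_one, hQ]
  have hPa : rF N t ^ ((N:ℝ)-1+a)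
      = (1 + ((N:ℝ)-2) * Real.exp t)⁻¹ * rF N t * rF N t ^ a := by
    rw [show (N:ℝ)-1+a = (((N:ℝ)-2) + 1) + a by ring, Real.rpow_add hr,
      Real.rpow_add hr, Real.rpow_one, hQ]
  have hrt := hasDerivAt_rF N hN t
  rw [hP] at hrt
  have h1 := hrt.rpow_const (p := (N:ℝ)-1) (Or.inl hr.ne')
  rw [show (N:ℝ)-1-1 = (N:ℝ)-2 by ring, hQ] at h1
  have h2 := hu1.comp t hrt
  have h3 := hu2.comp t hrt
  have hnum := ((Real.hasDerivAt_exp t).mul h1).mul h3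
  have hXF : HasDerivAt (XF N u) _ t := hnum.div h2 hU.ne'
  rw [hXF.deriv]
  have hu'' : deriv (deriv u) (rF N t)
      = rF N t ^ a * v (rF N t) ^ δ - (((N:ℝ)-1)/(rF N t)) * deriv u (rF N t) := by
    linarith
  simp only [XF, ZF, Function.comp, Pi.mul_apply]
  rw [hP, hPa, hu'']
  field_simp [hA.ne', show 1 + rexp t * ((N:ℝ)-2) ≠ 0 by rw [mul_comm]; exact hA.ne']
  ring

lemma aux_Z (N : ℕ) (hN : 1 ≤ N) (a δ : ℝ) (u v : ℝ → ℝ) (t : ℝ)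
    (hr : 0 < rF N t)
    (hv1 : HasDerivAt v (deriv v (rF N t)) (rF N t))
    (hu2 : HasDerivAt (deriv u) (deriv (deriv u) (rF N t)) (rF N t))
    (hV : 0 < v (rF N t)) (hU' : deriv u (rF N t) ≠ 0)
    (hode : deriv (deriv u) (rF N t) + (((N:ℝ)-1)/(rF N t)) * deriv u (rF N t)
      = rF N t ^ a * v (rF N t) ^ δ) :
    deriv (ZF N a δ u v) t
      = ZF N a δ u v t * (1 - δ * YF N v t - ZF N a δ u v t -
          (2 * (N : ℝ) - 2 + a) * Real.exp t / (1 + ((N : ℝ) - 2) * Real.exp t)) := by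
  obtain ⟨hA, hQ⟩ := rF_aux N hN t hr
  have hP : rF N t ^ ((N:ℝ)-1) = (1 + ((N:ℝ)-2) * Real.exp t)⁻¹ * rF N t := by
    rw [show (N:ℝ)-1 = ((N:ℝ)-2) + 1 by ring, Real.rpow_add hr, Real.rpow_one, hQ]
  have hPa : rF N t ^ ((N:ℝ)-1+a)
      = (1 + ((N:ℝ)-2) * Real.exp t)⁻¹ * rF N t * rF N t ^ a := by
    rw [show (N:ℝ)-1+a = (((N:ℝ)-2) + 1) + a by ring, Real.rpow_add hr,
      Real.rpow_add hr, Real.rpow_one, hQ]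
  have hrt := hasDerivAt_rF N hN t
  rw [hP] at hrt
  have h1 := hrt.rpow_const (p := (N:ℝ)-1+a) (Or.inl hr.ne')
  rw [show (N:ℝ)-1+a-1 = ((N:ℝ)-2)+a by ring, Real.rpow_add hr, hQ] at h1
  have h2 := hv1.comp t hrt
  have h3 := h2.rpow_const (p := δ) (Or.inl hV.ne')
  simp only [Function.comp_apply] at h3
  rw [show v (rF N t) ^ (δ-1) = v (rF N t) ^ δ / v (rF N t) by
    rw [Real.rpow_sub hV, Real.rpow_one]] at h3
  have h4 := hu2.comp t hrt
  have hnum := ((Real.hasDerivAt_exp t).mul h1).mul h3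
  have hZF : HasDerivAt (ZF N a δ u v) _ t := (hnum.div h4 hU').neg
  rw [hZF.deriv]
  have hu'' : deriv (deriv u) (rF N t)
      = rF N t ^ a * v (rF N t) ^ δ - (((N:ℝ)-1)/(rF N t)) * deriv u (rF N t) := by
    linarith
  simp only [ZF, YF, Function.comp, Pi.mul_apply]
  rw [hP, hPa, hu'']
  field_simp [hA.ne', show 1 + rexp t * ((N:ℝ)-2) ≠ 0 by rw [mul_comm]; exact hA.ne']
  ring

lemma aux_rec (N : ℕ) (a b δ μ D γ : ℝ)
    (hD : D = μ * δ - 1) (hDpos : 0 < D)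
    (hγ : γ = 2 * (1 + δ) / D) (u v : ℝ → ℝ) (t : ℝ)
    (hr : 0 < rF N t) (hU : 0 < u (rF N t)) (hV : 0 < v (rF N t))
    (hU' : 0 < deriv u (rF N t)) (hV' : 0 < deriv v (rF N t)) :
    u (rF N t)
      = Real.exp t ^ (-γ) * (rF N t ^ (2 * (N : ℝ) - 2 + a)) ^ (-(1 / D)) *
          (rF N t ^ (2 * (N : ℝ) - 2 + b)) ^ (-(δ / D)) *
          (|ZF N a δ u v t| * XF N u t) ^ (1 / D) *
          (|WF N b μ u v t| * YF N v t) ^ (δ / D) := by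
  have hs : 0 < Real.exp t := Real.exp_pos t
  have hZX : |ZF N a δ u v t| * XF N u t
      = Real.exp t * Real.exp t * rF N t ^ (2*(N:ℝ)-2+a) * v (rF N t) ^ δ / u (rF N t) := by
    simp only [ZF, XF]
    rw [abs_neg, abs_of_pos (by
      exact div_pos (mul_pos (mul_pos hs (Real.rpow_pos_of_pos hr _))
        (Real.rpow_pos_of_pos hV _)) hU')]
    rw [show 2*(N:ℝ)-2+a = ((N:ℝ)-1+a) + ((N:ℝ)-1) by ring,
      Real.rpow_add hr ((N:ℝ)-1+a) ((N:ℝ)-1), Real.rpow_add hr ((N:ℝ)-1) a]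
    field_simp
  have hWY : |WF N b μ u v t| * YF N v t
      = Real.exp t * Real.exp t * rF N t ^ (2*(N:ℝ)-2+b) * u (rF N t) ^ μ / v (rF N t) := by
    simp only [WF, YF]
    rw [abs_neg, abs_of_pos (by
      exact div_pos (mul_pos (mul_pos hs (Real.rpow_pos_of_pos hr _))
        (Real.rpow_pos_of_pos hU _)) hV')]
    rw [show 2*(N:ℝ)-2+b = ((N:ℝ)-1+b) + ((N:ℝ)-1) by ring,
      Real.rpow_add hr ((N:ℝ)-1+b) ((N:ℝ)-1), Real.rpow_add hr ((N:ℝ)-1) b]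
    field_simp
  have hZXpos : 0 < |ZF N a δ u v t| * XF N u t := by
    rw [hZX]
    exact div_pos (mul_pos (mul_pos (mul_pos hs hs) (Real.rpow_pos_of_pos hr _))
      (Real.rpow_pos_of_pos hV _)) hU
  have hWYpos : 0 < |WF N b μ u v t| * YF N v t := by
    rw [hWY]
    exact div_pos (mul_pos (mul_pos (mul_pos hs hs) (Real.rpow_pos_of_pos hr _))
      (Real.rpow_pos_of_pos hU _)) hV
  have lZX : Real.log (|ZF N a δ u v t| * XF N u t)
      = t + t + (2*(N:ℝ)-2+a) * Real.log (rF N t) + δ * Real.log (v (rF N t))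
        - Real.log (u (rF N t)) := by
    rw [hZX, Real.log_div (mul_ne_zero (mul_ne_zero (mul_ne_zero hs.ne' hs.ne')
        (Real.rpow_pos_of_pos hr _).ne') (Real.rpow_pos_of_pos hV _).ne') hU.ne',
      Real.log_mul (mul_ne_zero (mul_ne_zero hs.ne' hs.ne')
        (Real.rpow_pos_of_pos hr _).ne') (Real.rpow_pos_of_pos hV _).ne',
      Real.log_mul (mul_ne_zero hs.ne' hs.ne') (Real.rpow_pos_of_pos hr _).ne',
      Real.log_mul hs.ne' hs.ne', Real.log_rpow hr, Real.log_rpow hV, Real.log_exp]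
  have lWY : Real.log (|WF N b μ u v t| * YF N v t)
      = t + t + (2*(N:ℝ)-2+b) * Real.log (rF N t) + μ * Real.log (u (rF N t))
        - Real.log (v (rF N t)) := by
    rw [hWY, Real.log_div (mul_ne_zero (mul_ne_zero (mul_ne_zero hs.ne' hs.ne')
        (Real.rpow_pos_of_pos hr _).ne') (Real.rpow_pos_of_pos hU _).ne') hV.ne',
      Real.log_mul (mul_ne_zero (mul_ne_zero hs.ne' hs.ne')
        (Real.rpow_pos_of_pos hr _).ne') (Real.rpow_pos_of_pos hU _).ne',
      Real.log_mul (mul_ne_zero hs.ne' hs.ne') (Real.rpow_pos_of_pos hr _).ne',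
      Real.log_mul hs.ne' hs.ne', Real.log_rpow hr, Real.log_rpow hU, Real.log_exp]
  have hE : 0 < Real.exp t ^ (-γ) * (rF N t ^ (2 * (N : ℝ) - 2 + a)) ^ (-(1 / D)) *
          (rF N t ^ (2 * (N : ℝ) - 2 + b)) ^ (-(δ / D)) *
          (|ZF N a δ u v t| * XF N u t) ^ (1 / D) *
          (|WF N b μ u v t| * YF N v t) ^ (δ / D) :=
    mul_pos (mul_pos (mul_pos (mul_pos (Real.rpow_pos_of_pos hs _)
      (Real.rpow_pos_of_pos (Real.rpow_pos_of_pos hr _) _))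
      (Real.rpow_pos_of_pos (Real.rpow_pos_of_pos hr _) _))
      (Real.rpow_pos_of_pos hZXpos _)) (Real.rpow_pos_of_pos hWYpos _)
  refine (Real.log_injOn_pos (Set.mem_Ioi.2 hU) (Set.mem_Ioi.2 hE) ?_)
  rw [Real.log_mul (mul_pos (mul_pos (mul_pos (Real.rpow_pos_of_pos hs _)
      (Real.rpow_pos_of_pos (Real.rpow_pos_of_pos hr _) _))
      (Real.rpow_pos_of_pos (Real.rpow_pos_of_pos hr _) _))
      (Real.rpow_pos_of_pos hZXpos _)).ne' (Real.rpow_pos_of_pos hWYpos _).ne',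
    Real.log_mul (mul_pos (mul_pos (Real.rpow_pos_of_pos hs _)
      (Real.rpow_pos_of_pos (Real.rpow_pos_of_pos hr _) _))
      (Real.rpow_pos_of_pos (Real.rpow_pos_of_pos hr _) _)).ne'
      (Real.rpow_pos_of_pos hZXpos _).ne',
    Real.log_mul (mul_pos (Real.rpow_pos_of_pos hs _)
      (Real.rpow_pos_of_pos (Real.rpow_pos_of_pos hr _) _)).ne'
      (Real.rpow_pos_of_pos (Real.rpow_pos_of_pos hr _) _).ne',
    Real.log_mul (Real.rpow_pos_of_pos hs _).ne'
      (Real.rpow_pos_of_pos (Real.rpow_pos_of_pos hr _) _).ne',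
    Real.log_rpow hs, Real.log_rpow (Real.rpow_pos_of_pos hr _),
    Real.log_rpow (Real.rpow_pos_of_pos hr _), Real.log_rpow hZXpos, Real.log_rpow hWYpos,
    Real.log_rpow hr, Real.log_rpow hr, Real.log_exp, lZX, lWY]
  subst hγ hD
  field_simp [hDpos.ne', show δ * μ - 1 ≠ 0 by nlinarith]
  ring

lemma YF_eq_XF (N : ℕ) (v : ℝ → ℝ) : YF N v = XF N v := rfl

lemma WF_eq_ZF (N : ℕ) (b μ : ℝ) (u v : ℝ → ℝ) : WF N b μ u v = ZF N b μ v u := rfl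

theorem stmt7 (N : ℕ) (hN : 1 ≤ N) (a b δ μ D γ ξ : ℝ)
    (ha : max (-2 : ℝ) (-(N : ℝ)) < a) (hb : max (-2 : ℝ) (-(N : ℝ)) < b)
    (hδ : 0 < δ) (hμ : 0 < μ)
    (hD : D = μ * δ - 1) (hDpos : 0 < D)
    (hγ : γ = 2 * (1 + δ) / D) (hξ : ξ = 2 * (1 + μ) / D)
    (r0 : ℝ) (hr0 : 0 ≤ r0) (hr01 : r0 < 1)
    (u v : ℝ → ℝ)
    (hsol : RadialSystem N a b δ μ u v (Ioo r0 1))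
    (hpos : ∀ r ∈ Ioo r0 1, 0 < u r ∧ 0 < v r ∧ 0 < deriv u r ∧ 0 < deriv v r) :
    ∃ t0 : ℝ, ∀ t < t0,
      rF N t ∈ Ioo r0 1 ∧
      deriv (XF N u) t = XF N u t * (XF N u t + 1 + ZF N a δ u v t) ∧
      deriv (YF N v) t = YF N v t * (YF N v t + 1 + WF N b μ u v t) ∧
      deriv (ZF N a δ u v) t
        = ZF N a δ u v t * (1 - δ * YF N v t - ZF N a δ u v t -
            (2 * (N : ℝ) - 2 + a) * Real.exp t / (1 + ((N : ℝ) - 2) * Real.exp t)) ∧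
      deriv (WF N b μ u v) t
        = WF N b μ u v t * (1 - μ * XF N u t - WF N b μ u v t -
            (2 * (N : ℝ) - 2 + b) * Real.exp t / (1 + ((N : ℝ) - 2) * Real.exp t)) ∧
      u (rF N t)
        = Real.exp t ^ (-γ) * (rF N t ^ (2 * (N : ℝ) - 2 + a)) ^ (-(1 / D)) *
            (rF N t ^ (2 * (N : ℝ) - 2 + b)) ^ (-(δ / D)) *
            (|ZF N a δ u v t| * XF N u t) ^ (1 / D) *
            (|WF N b μ u v t| * YF N v t) ^ (δ / D) ∧
      v (rF N t)
        = Real.exp t ^ (-ξ) * (rF N t ^ (2 * (N : ℝ) - 2 + a)) ^ (-(μ / D)) *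
            (rF N t ^ (2 * (N : ℝ) - 2 + b)) ^ (-(1 / D)) *
            (|WF N b μ u v t| * YF N v t) ^ (1 / D) *
            (|ZF N a δ u v t| * XF N u t) ^ (μ / D) := by
  obtain ⟨t0, ht0⟩ : ∃ t0 : ℝ, ∀ t ≤ t0, r0 < rF N t := by
    have h := (rF_tendsto N).eventually (eventually_gt_nhds hr01)
    exact Filter.eventually_atBot.mp h
  refine ⟨t0, fun t ht => ?_⟩
  have hrmem : rF N t ∈ Ioo r0 1 := ⟨ht0 t ht.le, rF_lt_one N hN t⟩
  have hr : 0 < rF N t := lt_of_le_of_lt hr0 hrmem.1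
  obtain ⟨hU, hV, hU', hV'⟩ := hpos _ hrmem
  obtain ⟨hucd, hvcd, hodes⟩ := hsol
  obtain ⟨hode1, hode2⟩ := hodes _ hrmem
  have hmem : Ioo r0 1 ∈ nhds (rF N t) := isOpen_Ioo.mem_nhds hrmem
  have hu1 : HasDerivAt u (deriv u (rF N t)) (rF N t) :=
    ((hucd.differentiableOn (by norm_num)).differentiableAt hmem).hasDerivAt
  have hv1 : HasDerivAt v (deriv v (rF N t)) (rF N t) :=
    ((hvcd.differentiableOn (by norm_num)).differentiableAt hmem).hasDerivAt
  have hu2 : HasDerivAt (deriv u) (deriv (deriv u) (rF N t)) (rF N t) :=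
    (((hucd.deriv_of_isOpen isOpen_Ioo (m := 1) (by norm_num)).differentiableOn
      (by norm_num)).differentiableAt hmem).hasDerivAt
  have hv2 : HasDerivAt (deriv v) (deriv (deriv v) (rF N t)) (rF N t) :=
    (((hvcd.deriv_of_isOpen isOpen_Ioo (m := 1) (by norm_num)).differentiableOn
      (by norm_num)).differentiableAt hmem).hasDerivAt
  refine ⟨hrmem, aux_X N hN a δ u v t hr hu1 hu2 hU hU'.ne' hode1, ?_,
    aux_Z N hN a δ u v t hr hv1 hu2 hV hU'.ne' hode1, ?_,
    aux_rec N a b δ μ D γ hD hDpos hγ u v t hr hU hV hU' hV', ?_⟩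
  · rw [YF_eq_XF N v, WF_eq_ZF N b μ u v]
    exact aux_X N hN b μ v u t hr hv1 hv2 hV hV'.ne' hode2
  · have h := aux_Z N hN b μ v u t hr hu1 hv2 hU hV'.ne' hode2
    rw [YF_eq_XF N u, ← WF_eq_ZF N b μ u v] at h
    exact h
  · have h := aux_rec N b a μ δ D ξ (by rw [hD]; ring) hDpos hξ v u t hr hV hU hV' hU'
    rw [← WF_eq_ZF N b μ u v, WF_eq_ZF N a δ v u, ← YF_eq_XF N v, YF_eq_XF N u] at h
    rw [h]
    ring
end

section
/- Let δ, μ > 0 with μδ > 1 and let k ≥ 1. Let (x, y) : [0, ∞) → ℝ² be continuously differentiable with x'(τ) = x(τ)·(2 − x(τ) − δ·y(τ)) and y'(τ) = (y(τ) − 1/(δ+1))·((μ+1)·x(τ) − (δ+1)·y(τ)) for all τ ≥ 0, and suppose that for all τ ≥ 0: 1/k² ≤ x(τ) ≤ k² and 1/(δ+1) + 1/(2(μ+1)k⁴) ≤ y(τ) ≤ k². Then lim_{τ→∞} x(τ) = 2(δ+1)/(μδ+2δ+1) and lim_{τ→∞} y(τ) = 2(μ+1)/(μδ+2δ+1). 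-/
open Real Set Filter

lemma auxFnonneg {u : ℝ} (hu : 0 < u) : 0 ≤ u - 1 - Real.log u := by
  have := Real.log_le_sub_one_of_pos hu; linarith

lemma auxFlower {u M : ℝ} (hu : 0 < u) (huM : u ≤ M) :
    (u - 1) ^ 2 ≤ (1 + Real.sqrt M) ^ 2 * (u - 1 - Real.log u) := by
  have h1 : Real.log u = 2 * Real.log (Real.sqrt u) := by
    rw [Real.log_sqrt hu.le]; ring
  have h2 : Real.log (Real.sqrt u) ≤ Real.sqrt u - 1 :=
    Real.log_le_sub_one_of_pos (Real.sqrt_pos.mpr hu)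
  have hs : Real.sqrt u ^ 2 = u := Real.sq_sqrt hu.le
  have hsM : Real.sqrt u ≤ Real.sqrt M := Real.sqrt_le_sqrt huM
  have hs0 : 0 ≤ Real.sqrt u := Real.sqrt_nonneg u
  have hM0 : 0 ≤ Real.sqrt M := Real.sqrt_nonneg M
  nlinarith [sq_nonneg (Real.sqrt u - 1), sq_nonneg (Real.sqrt u + 1),
    sq_nonneg (Real.sqrt M - Real.sqrt u), mul_nonneg hs0 hM0,
    mul_nonneg (sq_nonneg (Real.sqrt u - 1)) (mul_nonneg hs0 hM0),
    mul_nonneg (sq_nonneg (Real.sqrt u - 1)) hM0,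
    mul_nonneg (sq_nonneg (Real.sqrt u - 1)) hs0]

lemma auxFupper {u m : ℝ} (hm : 0 < m) (hmu : m ≤ u) :
    u - 1 - Real.log u ≤ (u - 1) ^ 2 / m := by
  have hu : 0 < u := hm.trans_le hmu
  have h := Real.log_le_sub_one_of_pos (show (0:ℝ) < u⁻¹ by positivity)
  rw [Real.log_inv] at h
  have h1 : u - 1 - Real.log u ≤ (u - 1) ^ 2 / u := by
    rw [le_div_iff₀ hu]
    nlinarith [mul_le_mul_of_nonneg_left h hu.le, mul_inv_cancel₀ hu.ne']
  refine h1.trans ?_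
  gcongr

lemma hasDerivLyap {c τ : ℝ} {s : Set ℝ} (hc : 0 < c) {f : ℝ → ℝ} {f' : ℝ}
    (hf : HasDerivWithinAt f f' s τ) (hfpos : 0 < f τ) :
    HasDerivWithinAt (fun t => c * (f t / c - 1 - Real.log (f t / c)))
      ((1 - c / f τ) * f') s τ := by
  have h1 : HasDerivWithinAt (fun t => f t / c) (f' / c) s τ := hf.div_const c
  have h2 : HasDerivAt Real.log (f τ / c)⁻¹ (f τ / c) :=
    Real.hasDerivAt_log (by positivity)
  have h3 : HasDerivWithinAt (fun t => Real.log (f t / c)) ((f τ / c)⁻¹ * (f' / c)) s τ :=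
    by have := h2.comp_hasDerivWithinAt (x := τ) h1; exact this
  have h4 := ((h1.sub_const 1).sub h3).const_mul c
  refine h4.congr_deriv ?_
  field_simp

lemma tendsto_of_sq_le_exp {f : ℝ → ℝ} {a C B lam : ℝ} (hlam : 0 < lam)
    (hb : ∀ τ ∈ Ici (0:ℝ), (f τ - a) ^ 2 ≤ C * (Real.exp (-(lam * τ)) * B)) :
    Tendsto f atTop (nhds a) := by
  have hsq : Tendsto (fun τ => (f τ - a) ^ 2) atTop (nhds 0) := by
    apply squeeze_zero' (Eventually.of_forall fun τ => sq_nonneg _)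
      ((eventually_ge_atTop (0:ℝ)).mono fun τ hτ => hb τ hτ)
    have h1 : Tendsto (fun τ : ℝ => Real.exp (-(lam * τ))) atTop (nhds 0) :=
      Real.tendsto_exp_atBot.comp (tendsto_neg_atTop_atBot.comp
        (Tendsto.const_mul_atTop hlam tendsto_id))
    simpa using (h1.mul_const B).const_mul C
  rw [tendsto_iff_dist_tendsto_zero]
  have h2 := (Real.continuous_sqrt.tendsto 0).comp hsq
  simp only [Function.comp_def] at h2
  simpa [Real.dist_eq, Real.sqrt_sq_eq_abs] using h2

lemma mulHelp {z c A : ℝ} (hz : z ≠ 0) : (1 - c / z) * (z * A) = (z - c) * A := by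
  field_simp

set_option maxHeartbeats 1000000 in
theorem stmt10 (δ μ k : ℝ) (hδ : 0 < δ) (hμ : 0 < μ) (hD : 1 < μ * δ) (hk : 1 ≤ k)
    (x y : ℝ → ℝ)
    (hx : ∀ τ ∈ Ici (0 : ℝ),
      HasDerivWithinAt x (x τ * (2 - x τ - δ * y τ)) (Ici 0) τ)
    (hy : ∀ τ ∈ Ici (0 : ℝ),
      HasDerivWithinAt y ((y τ - 1 / (δ + 1)) * ((μ + 1) * x τ - (δ + 1) * y τ)) (Ici 0) τ)
    (hxb : ∀ τ ∈ Ici (0 : ℝ), 1 / k ^ 2 ≤ x τ ∧ x τ ≤ k ^ 2)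
    (hyb : ∀ τ ∈ Ici (0 : ℝ),
      1 / (δ + 1) + 1 / (2 * (μ + 1) * k ^ 4) ≤ y τ ∧ y τ ≤ k ^ 2) :
    Tendsto x atTop (nhds (2 * (δ + 1) / (μ * δ + 2 * δ + 1))) ∧
    Tendsto y atTop (nhds (2 * (μ + 1) / (μ * δ + 2 * δ + 1))) := by
  have hk0 : (0:ℝ) < k := lt_of_lt_of_le one_pos hk
  have hDD : (0:ℝ) < μ * δ + 2 * δ + 1 := by positivity
  obtain ⟨xs, hxsdef⟩ : ∃ a : ℝ, a = 2 * (δ + 1) / (μ * δ + 2 * δ + 1) := ⟨_, rfl⟩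
  obtain ⟨ys, hysdef⟩ : ∃ a : ℝ, a = 2 * (μ + 1) / (μ * δ + 2 * δ + 1) := ⟨_, rfl⟩
  suffices hs : Tendsto x atTop (nhds xs) ∧ Tendsto y atTop (nhds ys) by
    rw [hxsdef, hysdef] at hs; exact hs
  have hxs : 0 < xs := by rw [hxsdef]; positivity
  have hys : 0 < ys := by rw [hysdef]; positivity
  have hid1 : xs + δ * ys = 2 := by
    rw [hxsdef, hysdef]; field_simp; ring
  have hid2 : (μ + 1) * xs = (δ + 1) * ys := by
    rw [hxsdef, hysdef]; field_simp
  obtain ⟨η, hηdef⟩ : ∃ a : ℝ, a = ys - 1 / (δ + 1) := ⟨_, rfl⟩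
  have hη : 0 < η := by
    rw [hηdef, hysdef, sub_pos, div_lt_div_iff₀ (by positivity) hDD]
    nlinarith
  obtain ⟨ε, hεdef⟩ : ∃ a : ℝ, a = 1 / (2 * (μ + 1) * k ^ 4) := ⟨_, rfl⟩
  have hε : 0 < ε := by rw [hεdef]; positivity
  obtain ⟨lam, hlamdef⟩ : ∃ a : ℝ, a = min (k ^ 2)⁻¹ ((δ + 1) * ε) := ⟨_, rfl⟩
  have hlam0 : 0 < lam := by
    rw [hlamdef]; exact lt_min (by positivity) (by positivity)
  have hx0 : ∀ τ ∈ Ici (0:ℝ), 0 < x τ :=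
    fun τ hτ => lt_of_lt_of_le (by positivity) (hxb τ hτ).1
  have hz0 : ∀ τ ∈ Ici (0:ℝ), ε ≤ y τ - 1 / (δ + 1) := by
    intro τ hτ
    have h := (hyb τ hτ).1
    rw [hεdef]; linarith
  have hzpos : ∀ τ ∈ Ici (0:ℝ), 0 < y τ - 1 / (δ + 1) :=
    fun τ hτ => lt_of_lt_of_le hε (hz0 τ hτ)
  -- Lyapunov function
  obtain ⟨W, hWdef⟩ : ∃ W : ℝ → ℝ, W = fun t =>
      (μ + 1) * (xs * (x t / xs - 1 - Real.log (x t / xs))) +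
        δ * (η * ((y t - 1 / (δ + 1)) / η - 1 - Real.log ((y t - 1 / (δ + 1)) / η))) := ⟨_, rfl⟩
  have hWeval : ∀ t : ℝ, W t =
      (μ + 1) * (xs * (x t / xs - 1 - Real.log (x t / xs))) +
        δ * (η * ((y t - 1 / (δ + 1)) / η - 1 - Real.log ((y t - 1 / (δ + 1)) / η))) := by
    intro t; rw [hWdef]
  -- derivative of W
  have hWd : ∀ τ ∈ Ici (0:ℝ), HasDerivWithinAt W
      (-((μ + 1) * (x τ - xs) ^ 2 + δ * ((δ + 1) * (y τ - ys) ^ 2))) (Ici 0) τ := by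
    intro τ hτ
    have hxτ := hx0 τ hτ
    have hzτ := hzpos τ hτ
    have hWx : HasDerivWithinAt (fun t => xs * (x t / xs - 1 - Real.log (x t / xs)))
        ((x τ - xs) * (2 - x τ - δ * y τ)) (Ici 0) τ := by
      have h := hasDerivLyap hxs (hx τ hτ) hxτ
      rwa [mulHelp hxτ.ne'] at h
    have hWy : HasDerivWithinAt
        (fun t => η * ((y t - 1 / (δ + 1)) / η - 1 - Real.log ((y t - 1 / (δ + 1)) / η)))
        ((y τ - ys) * ((μ + 1) * x τ - (δ + 1) * y τ)) (Ici 0) τ := by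
      have h := hasDerivLyap hη ((hy τ hτ).sub_const (1 / (δ + 1))) hzτ
      rw [mulHelp hzτ.ne'] at h
      have e : y τ - 1 / (δ + 1) - η = y τ - ys := by rw [hηdef]; ring
      rwa [e] at h
    rw [hWdef]
    have h := (hWx.const_mul (μ + 1)).add (hWy.const_mul δ)
    refine h.congr_deriv ?_
    have e1 : 2 - x τ - δ * y τ = -(x τ - xs) - δ * (y τ - ys) := by linear_combination -hid1
    have e2 : (μ + 1) * x τ - (δ + 1) * y τ
        = (μ + 1) * (x τ - xs) - (δ + 1) * (y τ - ys) := by linear_combination hid2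
    rw [e1, e2]; ring
  -- upper quadratic bound for W
  have hWub : ∀ τ ∈ Ici (0:ℝ),
      W τ ≤ (μ + 1) * (k ^ 2 * (x τ - xs) ^ 2) + δ * ((y τ - ys) ^ 2 / ε) := by
    intro τ hτ
    have hxτ := hx0 τ hτ
    have hzτ := hzpos τ hτ
    have hmx : 1 / (k ^ 2 * xs) ≤ x τ / xs := by
      rw [show (1:ℝ) / (k ^ 2 * xs) = (1 / k ^ 2) / xs by ring]
      gcongr
      exact (hxb τ hτ).1
    have h1 := auxFupper (show (0:ℝ) < 1 / (k ^ 2 * xs) by positivity) hmx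
    have e1 : xs * ((x τ / xs - 1) ^ 2 / (1 / (k ^ 2 * xs))) = k ^ 2 * (x τ - xs) ^ 2 := by
      field_simp
    have h1' : xs * (x τ / xs - 1 - Real.log (x τ / xs)) ≤ k ^ 2 * (x τ - xs) ^ 2 := by
      rw [← e1]
      exact mul_le_mul_of_nonneg_left h1 hxs.le
    have hmy : ε / η ≤ (y τ - 1 / (δ + 1)) / η := by
      gcongr
      exact hz0 τ hτ
    have h2 := auxFupper (show (0:ℝ) < ε / η by positivity) hmy
    have h5 : (y τ - 1 / (δ + 1)) / η - 1 = (y τ - ys) / η := by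
      rw [div_sub' hη.ne', div_eq_div_iff hη.ne' hη.ne']
      rw [hηdef]; ring
    have e2 : η * (((y τ - ys) / η) ^ 2 / (ε / η)) = (y τ - ys) ^ 2 / ε := by
      field_simp
    have h2' : η * ((y τ - 1 / (δ + 1)) / η - 1 - Real.log ((y τ - 1 / (δ + 1)) / η))
        ≤ (y τ - ys) ^ 2 / ε := by
      rw [← e2]
      rw [h5] at h2
      refine mul_le_mul_of_nonneg_left ?_ hη.le
      rw [← h5] at h2 ⊢
      exact h2
    rw [hWeval τ]
    have hh1 := mul_le_mul_of_nonneg_left h1' (show (0:ℝ) ≤ μ + 1 by linarith)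
    have hh2 := mul_le_mul_of_nonneg_left h2' hδ.le
    linarith
  -- key differential inequality
  have hkey : ∀ τ ∈ Ici (0:ℝ),
      lam * W τ + -((μ + 1) * (x τ - xs) ^ 2 + δ * ((δ + 1) * (y τ - ys) ^ 2)) ≤ 0 := by
    intro τ hτ
    have hl1 : lam ≤ (k ^ 2)⁻¹ := by rw [hlamdef]; exact min_le_left _ _
    have hl2 : lam ≤ (δ + 1) * ε := by rw [hlamdef]; exact min_le_right _ _
    have h1' : lam * ((μ + 1) * (k ^ 2 * (x τ - xs) ^ 2)) ≤ (μ + 1) * (x τ - xs) ^ 2 := by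
      calc lam * ((μ + 1) * (k ^ 2 * (x τ - xs) ^ 2))
          ≤ (k ^ 2)⁻¹ * ((μ + 1) * (k ^ 2 * (x τ - xs) ^ 2)) :=
            mul_le_mul_of_nonneg_right hl1 (by positivity)
        _ = (μ + 1) * (x τ - xs) ^ 2 := by field_simp
    have h2' : lam * (δ * ((y τ - ys) ^ 2 / ε)) ≤ δ * ((δ + 1) * (y τ - ys) ^ 2) := by
      calc lam * (δ * ((y τ - ys) ^ 2 / ε))
          ≤ ((δ + 1) * ε) * (δ * ((y τ - ys) ^ 2 / ε)) :=
            mul_le_mul_of_nonneg_right hl2 (by positivity)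
        _ = δ * ((δ + 1) * (y τ - ys) ^ 2) := by field_simp
    have h3 := mul_le_mul_of_nonneg_left (hWub τ hτ) hlam0.le
    rw [mul_add] at h3
    linarith
  -- the exponentially weighted function G is antitone
  obtain ⟨G, hGdef⟩ : ∃ G : ℝ → ℝ, G = fun t => Real.exp (lam * t) * W t := ⟨_, rfl⟩
  have hGd : ∀ τ ∈ Ici (0:ℝ), HasDerivWithinAt G
      (Real.exp (lam * τ) * (lam * W τ +
        -((μ + 1) * (x τ - xs) ^ 2 + δ * ((δ + 1) * (y τ - ys) ^ 2)))) (Ici 0) τ := by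
    intro τ hτ
    have he : HasDerivWithinAt (fun t => Real.exp (lam * t)) (Real.exp (lam * τ) * lam)
        (Ici 0) τ := by
      have h := ((Real.hasDerivAt_exp (lam * τ)).comp τ
        ((hasDerivAt_id τ).const_mul lam)).hasDerivWithinAt (s := Ici 0)
      simpa [Function.comp_def] using h
    rw [hGdef]
    have h := he.mul (hWd τ hτ)
    refine h.congr_deriv ?_
    ring
  have hanti : AntitoneOn G (Ici 0) := by
    apply antitoneOn_of_hasDerivWithinAt_nonpos (convex_Ici 0)
      (f' := fun τ => Real.exp (lam * τ) * (lam * W τ +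
        -((μ + 1) * (x τ - xs) ^ 2 + δ * ((δ + 1) * (y τ - ys) ^ 2))))
    · exact fun τ hτ => (hGd τ hτ).continuousWithinAt
    · exact fun τ hτ => (hGd τ (interior_subset hτ)).mono interior_subset
    · exact fun τ hτ =>
        mul_nonpos_of_nonneg_of_nonpos (Real.exp_nonneg _) (hkey τ (interior_subset hτ))
  -- exponential decay of W
  have hWexp : ∀ τ ∈ Ici (0:ℝ), W τ ≤ Real.exp (-(lam * τ)) * W 0 := by
    intro τ hτ
    have h := hanti self_mem_Ici hτ hτ
    rw [hGdef] at h
    simp only [mul_zero, Real.exp_zero, one_mul] at h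
    have h2 := mul_le_mul_of_nonneg_left h (Real.exp_nonneg (-(lam * τ)))
    rw [← mul_assoc, ← Real.exp_add, neg_add_cancel, Real.exp_zero, one_mul] at h2
    exact h2
  -- lower quadratic bounds
  have hFy0 : ∀ τ ∈ Ici (0:ℝ),
      0 ≤ (y τ - 1 / (δ + 1)) / η - 1 - Real.log ((y τ - 1 / (δ + 1)) / η) :=
    fun τ hτ => auxFnonneg (by have := hzpos τ hτ; positivity)
  have hFx0 : ∀ τ ∈ Ici (0:ℝ), 0 ≤ x τ / xs - 1 - Real.log (x τ / xs) :=
    fun τ hτ => auxFnonneg (by have := hx0 τ hτ; positivity)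
  obtain ⟨Cx, hCxdef⟩ : ∃ a : ℝ, a = xs * (1 + Real.sqrt (k ^ 2 / xs)) ^ 2 / (μ + 1) := ⟨_, rfl⟩
  obtain ⟨Cy, hCydef⟩ : ∃ a : ℝ, a = η * (1 + Real.sqrt (k ^ 2 / η)) ^ 2 / δ := ⟨_, rfl⟩
  have hCx0 : 0 ≤ Cx := by
    rw [hCxdef]; positivity
  have hCy0 : 0 ≤ Cy := by
    rw [hCydef]; positivity
  have hlbx : ∀ τ ∈ Ici (0:ℝ), (x τ - xs) ^ 2 ≤ Cx * W τ := by
    intro τ hτ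
    have hxτ := hx0 τ hτ
    have huM : x τ / xs ≤ k ^ 2 / xs := by gcongr; exact (hxb τ hτ).2
    have hA := auxFlower (show (0:ℝ) < x τ / xs by positivity) huM
    have hWge : (μ + 1) * (xs * (x τ / xs - 1 - Real.log (x τ / xs))) ≤ W τ := by
      rw [hWeval τ]
      nlinarith [mul_nonneg hδ.le (mul_nonneg hη.le (hFy0 τ hτ))]
    have hux : x τ - xs = xs * (x τ / xs - 1) := by field_simp
    have step2 := mul_le_mul_of_nonneg_left hA (sq_nonneg xs)
    have step3 : xs ^ 2 * ((1 + Real.sqrt (k ^ 2 / xs)) ^ 2 * (x τ / xs - 1 - Real.log (x τ / xs)))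
        = Cx * ((μ + 1) * (xs * (x τ / xs - 1 - Real.log (x τ / xs)))) := by
      rw [hCxdef]
      field_simp
    have step4 := mul_le_mul_of_nonneg_left hWge hCx0
    calc (x τ - xs) ^ 2 = xs ^ 2 * (x τ / xs - 1) ^ 2 := by rw [hux]; ring
      _ ≤ xs ^ 2 * ((1 + Real.sqrt (k ^ 2 / xs)) ^ 2 * (x τ / xs - 1 - Real.log (x τ / xs))) :=
          step2
      _ = Cx * ((μ + 1) * (xs * (x τ / xs - 1 - Real.log (x τ / xs)))) := step3
      _ ≤ Cx * W τ := step4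
  have hlby : ∀ τ ∈ Ici (0:ℝ), (y τ - ys) ^ 2 ≤ Cy * W τ := by
    intro τ hτ
    have hzτ := hzpos τ hτ
    have hvM : (y τ - 1 / (δ + 1)) / η ≤ k ^ 2 / η := by
      gcongr
      have h := (hyb τ hτ).2
      have h2 : (0:ℝ) < 1 / (δ + 1) := by positivity
      linarith
    have hA := auxFlower (show (0:ℝ) < (y τ - 1 / (δ + 1)) / η by positivity) hvM
    have hWge : δ * (η * ((y τ - 1 / (δ + 1)) / η - 1 - Real.log ((y τ - 1 / (δ + 1)) / η)))
        ≤ W τ := by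
      rw [hWeval τ]
      nlinarith [mul_nonneg (show (0:ℝ) ≤ μ + 1 by linarith) (mul_nonneg hxs.le (hFx0 τ hτ))]
    have hux : y τ - ys = η * ((y τ - 1 / (δ + 1)) / η - 1) := by
      rw [mul_sub, mul_one, mul_div_cancel₀ _ hη.ne', hηdef]; ring
    have step2 := mul_le_mul_of_nonneg_left hA (sq_nonneg η)
    have step3 : η ^ 2 * ((1 + Real.sqrt (k ^ 2 / η)) ^ 2 *
          ((y τ - 1 / (δ + 1)) / η - 1 - Real.log ((y τ - 1 / (δ + 1)) / η)))
        = Cy * (δ * (η * ((y τ - 1 / (δ + 1)) / η - 1 - Real.log ((y τ - 1 / (δ + 1)) / η)))) := by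
      rw [hCydef]
      field_simp
    have step4 := mul_le_mul_of_nonneg_left hWge hCy0
    calc (y τ - ys) ^ 2 = η ^ 2 * ((y τ - 1 / (δ + 1)) / η - 1) ^ 2 := by rw [hux]; ring
      _ ≤ η ^ 2 * ((1 + Real.sqrt (k ^ 2 / η)) ^ 2 *
            ((y τ - 1 / (δ + 1)) / η - 1 - Real.log ((y τ - 1 / (δ + 1)) / η))) := step2
      _ = Cy * (δ * (η * ((y τ - 1 / (δ + 1)) / η - 1
            - Real.log ((y τ - 1 / (δ + 1)) / η)))) := step3
      _ ≤ Cy * W τ := step4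
  constructor
  · apply tendsto_of_sq_le_exp (C := Cx) (B := W 0) hlam0
    intro τ hτ
    exact (hlbx τ hτ).trans (mul_le_mul_of_nonneg_left (hWexp τ hτ) hCx0)
  · apply tendsto_of_sq_le_exp (C := Cy) (B := W 0) hlam0
    intro τ hτ
    exact (hlby τ hτ).trans (mul_le_mul_of_nonneg_left (hWexp τ hτ) hCy0)
end

section
/- Let δ, μ > 0. The system (T0) has no nonconstant periodic solution with values in (0, ∞) × (1/(δ+1), ∞): there is no nonconstant continuously differentiable periodic map (x, y) : ℝ → ℝ² satisfying x'(τ) = x(τ)·(2 − x(τ) − δ·y(τ)) and y'(τ) = (y(τ) − 1/(δ+1))·((μ+1)·x(τ) − (δ+1)·y(τ)) for all τ, with x(τ) > 0 and y(τ) > 1/(δ+1) for all τ. -/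
set_option maxHeartbeats 1000000


open Real Set Filter

theorem stmt11 (δ μ : ℝ) (hδ : 0 < δ) (hμ : 0 < μ) :
    ¬ ∃ (x y : ℝ → ℝ) (T : ℝ), 0 < T ∧
      (∀ τ : ℝ, HasDerivAt x (x τ * (2 - x τ - δ * y τ)) τ) ∧
      (∀ τ : ℝ, HasDerivAt y ((y τ - 1 / (δ + 1)) * ((μ + 1) * x τ - (δ + 1) * y τ)) τ) ∧
      (∀ τ : ℝ, 0 < x τ ∧ 1 / (δ + 1) < y τ) ∧
      (∀ τ : ℝ, x (τ + T) = x τ ∧ y (τ + T) = y τ) ∧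
      ¬ (∀ τ : ℝ, x τ = x 0 ∧ y τ = y 0) := by
  rintro ⟨x, y, T, hT, hx, hy, hpos, hper, hne⟩
  have hδ1 : (0:ℝ) < δ + 1 := by linarith
  have hD : (0:ℝ) < 2*δ+1+δ*μ := by nlinarith
  set c : ℝ := 1/(δ+1) with hc
  set xs : ℝ := 2*(δ+1)/(2*δ+1+δ*μ) with hxs
  set us : ℝ := (1+δ*μ+2*μ)/((δ+1)*(2*δ+1+δ*μ)) with hus
  set V : ℝ → ℝ := fun t => (μ+1)*(x t - xs*Real.log (x t)) + δ*((y t - c) - us*Real.log (y t - c)) with hV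
  set g : ℝ → ℝ := fun t => -((μ+1)*(x t - xs)^2 + δ*(δ+1)*(y t - c - us)^2) with hg
  have hpx : ∀ t, 0 < x t := fun t => (hpos t).1
  have hqy : ∀ t, 0 < y t - c := fun t => by have := (hpos t).2; simp only [hc]; linarith
  have hVd : ∀ t, HasDerivAt V (g t) t := by
    intro t
    have px : x t ≠ 0 := (hpx t).ne'
    have hq : y t - c ≠ 0 := (hqy t).ne'
    have h1 : HasDerivAt (fun s => Real.log (x s)) (2 - x t - δ * y t) t := by
      have := (hx t).log px
      rwa [mul_comm, mul_div_assoc, div_self px, mul_one] at this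
    have h2 : HasDerivAt (fun s => y s - c) ((y t - c) * ((μ+1) * x t - (δ+1) * y t)) t :=
      (hy t).sub_const c
    have h3 : HasDerivAt (fun s => Real.log (y s - c)) ((μ+1) * x t - (δ+1) * y t) t := by
      have := h2.log hq
      rwa [mul_comm, mul_div_assoc, div_self hq, mul_one] at this
    have h4 : HasDerivAt V
        ((μ+1)*((x t * (2 - x t - δ * y t)) - xs * (2 - x t - δ * y t))
          + δ*(((y t - c) * ((μ+1) * x t - (δ+1) * y t))
            - us * ((μ+1) * x t - (δ+1) * y t))) t := by
      exact (((hx t).sub (h1.const_mul xs)).const_mul (μ+1)).add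
        ((h2.sub (h3.const_mul us)).const_mul δ)
    convert h4 using 1
    simp only [hg]
    rw [hxs, hus, hc]
    field_simp
    ring
  have hVdiff : Differentiable ℝ V := fun t => (hVd t).differentiableAt
  have hderiv : ∀ t, deriv V t = g t := fun t => (hVd t).deriv
  have hanti : Antitone V := by
    apply antitone_of_deriv_nonpos hVdiff
    intro t
    rw [hderiv]
    simp only [hg]
    have h1 : 0 ≤ (μ+1)*(x t - xs)^2 := by positivity
    have h2 : 0 ≤ δ*(δ+1)*(y t - c - us)^2 := by positivity
    linarith
  have hVper : Function.Periodic V T := by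
    intro t
    simp only [hV, (hper t).1, (hper t).2]
  have hconst : ∀ t, V t = V 0 := by
    intro t
    obtain ⟨n, hn⟩ := exists_nat_ge (|t| / T)
    have hnT : |t| ≤ n * T := by
      rw [div_le_iff₀ hT] at hn; linarith
    have hle : t ≤ n * T := le_trans (le_abs_self t) hnT
    have hge : -(n * T) ≤ t := by
      have := neg_abs_le t; linarith
    have e1 : V (n * T) = V 0 := hVper.nat_mul_eq n
    have e2 : V (-(n * T)) = V 0 := by
      have := hVper.sub_nat_mul_eq (x := 0) n
      simpa using this
    have l1 : V (n * T) ≤ V t := hanti hle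
    have l2 : V t ≤ V (-(n * T)) := hanti hge
    linarith
  have hg0 : ∀ t, g t = 0 := by
    intro t
    have hV0 : V = fun _ => V 0 := funext hconst
    have : deriv V t = 0 := by rw [hV0]; simp
    rw [hderiv] at this
    exact this
  have hxy : ∀ t, x t = xs ∧ y t = c + us := by
    intro t
    have h := hg0 t
    simp only [hg] at h
    have h1 : 0 ≤ (μ+1)*(x t - xs)^2 := by positivity
    have h2 : 0 ≤ δ*(δ+1)*(y t - c - us)^2 := by positivity
    have e1 : (μ+1)*(x t - xs)^2 = 0 := by linarith
    have e2 : δ*(δ+1)*(y t - c - us)^2 = 0 := by linarith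
    have hx0 : (x t - xs)^2 = 0 := by
      rcases mul_eq_zero.mp e1 with h' | h'
      · linarith
      · exact h'
    have hy0 : (y t - c - us)^2 = 0 := by
      rcases mul_eq_zero.mp e2 with h' | h'
      · nlinarith [mul_pos hδ hδ1]
      · exact h'
    constructor
    · have := pow_eq_zero_iff (n := 2) (by norm_num) |>.mp hx0; linarith
    · have := pow_eq_zero_iff (n := 2) (by norm_num) |>.mp hy0; linarith
  apply hne
  intro τ
  obtain ⟨ha, hb⟩ := hxy τ
  obtain ⟨ha0, hb0⟩ := hxy 0
  exact ⟨by rw [ha, ha0], by rw [hb, hb0]⟩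
end

section
/- Assume N ≥ 1 and either min{γ_{a,b}, ξ_{a,b}} > N−2 or N ≤ 2. Set X₀ = γ_{a,b}, Y₀ = ξ_{a,b}, Z₀ = N−2−γ_{a,b}, W₀ = N−2−ξ_{a,b}, and consider the polynomial f(λ) = (λ−X₀)(λ+Z₀)(λ−Y₀)(λ+W₀) − δμ·X₀Y₀Z₀W₀ over ℂ. Then f has a real root λ₃ < 0 and a real root λ₄ > max{X₀, Y₀, |Z₀|, |W₀|}, and the remaining two roots of f (counted with multiplicity) have strictly positive real part; in particular exactly one root of f has negative real part. -/
open Real Set Filter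

lemma aux_not_pos_real {a b : ℂ} {k : ℝ} (ha : a.im < 0) (hb : b.im < 0) (hk : 0 < k) :
    a * b ≠ (k : ℂ) := by
  intro h
  have h1 : a.re * b.im + a.im * b.re = 0 := by
    have := congrArg Complex.im h; simpa [Complex.mul_im] using this
  have h2 : a.re * b.re - a.im * b.im = k := by
    have := congrArg Complex.re h; simpa [Complex.mul_re] using this
  nlinarith [mul_pos_of_neg_of_neg ha hb, sq_nonneg (a.im * b.re), sq_nonneg (a.re * b.im)]

lemma prod4_lt {a1 a2 a3 a4 b1 b2 b3 b4 : ℝ} (h1 : 0 < a1) (h2 : 0 < a2) (h3 : 0 < a3)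
    (h4 : 0 < a4) (g1 : a1 < b1) (g2 : a2 < b2) (g3 : a3 < b3) (g4 : a4 < b4) :
    a1 * a2 * a3 * a4 < b1 * b2 * b3 * b4 := by
  have h12 : a1 * a2 < b1 * b2 := by nlinarith
  have h34 : a3 * a4 < b3 * b4 := by nlinarith
  have := mul_pos h1 h2
  have := mul_pos h3 h4
  nlinarith

lemma prod4_le {a1 a2 a3 a4 b1 b2 b3 b4 : ℝ} (h1 : 0 < a1) (h2 : 0 < a2) (h3 : 0 < a3)
    (h4 : 0 < a4) (g1 : a1 ≤ b1) (g2 : a2 ≤ b2) (g3 : a3 ≤ b3) (g4 : a4 ≤ b4) :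
    a1 * a2 * a3 * a4 ≤ b1 * b2 * b3 * b4 := by
  have h12 : a1 * a2 ≤ b1 * b2 := by nlinarith
  have h34 : a3 * a4 ≤ b3 * b4 := by nlinarith
  have := mul_pos h1 h2
  have := mul_pos h3 h4
  nlinarith

set_option maxHeartbeats 2000000 in
theorem stmt19 (N : ℕ) (hN : 1 ≤ N) (a b δ μ D γab ξab X₀ Y₀ Z₀ W₀ : ℝ)
    (ha : max (-2 : ℝ) (-(N : ℝ)) < a) (hb : max (-2 : ℝ) (-(N : ℝ)) < b)
    (hδ : 0 < δ) (hμ : 0 < μ)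
    (hD : D = μ * δ - 1) (hDpos : 0 < D)
    (hγ : γab = ((2 + a) + (2 + b) * δ) / D) (hξ : ξab = ((2 + b) + (2 + a) * μ) / D)
    (hcde : (N : ℝ) - 2 < min γab ξab ∨ N ≤ 2)
    (hX : X₀ = γab) (hY : Y₀ = ξab)
    (hZ : Z₀ = (N : ℝ) - 2 - γab) (hW : W₀ = (N : ℝ) - 2 - ξab) :
    ∃ (lam₁ lam₂ : ℂ) (lam₃ lam₄ : ℝ),
      lam₃ < 0 ∧
      max (max X₀ Y₀) (max |Z₀| |W₀|) < lam₄ ∧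
      0 < lam₁.re ∧ 0 < lam₂.re ∧
      ∀ z : ℂ,
        (z - (X₀ : ℂ)) * (z + (Z₀ : ℂ)) * (z - (Y₀ : ℂ)) * (z + (W₀ : ℂ)) -
            (δ : ℂ) * (μ : ℂ) * (X₀ : ℂ) * (Y₀ : ℂ) * (Z₀ : ℂ) * (W₀ : ℂ)
          = (z - lam₁) * (z - lam₂) * (z - (lam₃ : ℂ)) * (z - (lam₄ : ℂ)) := by
  have ha2 : (-2:ℝ) < a := lt_of_le_of_lt (le_max_left _ _) ha
  have hb2 : (-2:ℝ) < b := lt_of_le_of_lt (le_max_left _ _) hb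
  have hγpos : 0 < γab := by
    rw [hγ]; apply div_pos; nlinarith; exact hDpos
  have hξpos : 0 < ξab := by
    rw [hξ]; apply div_pos; nlinarith; exact hDpos
  have hXp : 0 < X₀ := by rw [hX]; exact hγpos
  have hYp : 0 < Y₀ := by rw [hY]; exact hξpos
  have hZn : Z₀ < 0 := by
    rcases hcde with h | h
    · rw [lt_min_iff] at h; rw [hZ]; linarith [h.1]
    · have : (N:ℝ) ≤ 2 := by exact_mod_cast h
      rw [hZ]; linarith
  have hWn : W₀ < 0 := by
    rcases hcde with h | h
    · rw [lt_min_iff] at h; rw [hW]; linarith [h.2]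
    · have : (N:ℝ) ≤ 2 := by exact_mod_cast h
      rw [hW]; linarith
  have hδμ : 1 < δ * μ := by nlinarith
  have hZW : 0 < Z₀ * W₀ := mul_pos_of_neg_of_neg hZn hWn
  have hPpos : 0 < X₀ * Y₀ * (Z₀ * W₀) := mul_pos (mul_pos hXp hYp) hZW
  obtain ⟨K, hKdef⟩ : ∃ K : ℝ, K = δ * μ * (X₀ * Y₀ * Z₀ * W₀) := ⟨_, rfl⟩
  have hKpos : 0 < K := by rw [hKdef]; nlinarith
  obtain ⟨F, hF⟩ : ∃ F : ℝ → ℝ,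
      F = fun t => (t - X₀) * (t + Z₀) * (t - Y₀) * (t + W₀) - K := ⟨_, rfl⟩
  have hFcont : Continuous F := by rw [hF]; fun_prop
  have hnum : X₀ * Y₀ * Z₀ * W₀ - K < 0 := by
    rw [hKdef]; nlinarith [mul_pos hPpos (sub_pos.mpr hδμ)]
  have hF0 : F 0 < 0 := by simp only [hF]; nlinarith [hnum]
  have hK4 : K < (K+1)*(K+1)*(K+1)*(K+1) := by
    nlinarith [mul_pos hKpos hKpos, mul_pos (mul_pos hKpos hKpos) hKpos,
      mul_pos (mul_pos (mul_pos hKpos hKpos) hKpos) hKpos]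
  have hFneg : 0 < F (-(K+1)) := by
    simp only [hF]
    have hprod := prod4_lt (b1 := K+1+X₀) (b2 := K+1-Z₀) (b3 := K+1+Y₀) (b4 := K+1-W₀)
      (by linarith : (0:ℝ) < K+1) (by linarith : (0:ℝ) < K+1) (by linarith : (0:ℝ) < K+1)
      (by linarith : (0:ℝ) < K+1) (by linarith) (by linarith) (by linarith) (by linarith)
    have hEq : (-(K+1) - X₀) * (-(K+1) + Z₀) * (-(K+1) - Y₀) * (-(K+1) + W₀)
        = (K+1+X₀) * (K+1-Z₀) * (K+1+Y₀) * (K+1-W₀) := by ring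
    rw [hEq]
    linarith
  obtain ⟨u, humem, hFu⟩ := intermediate_value_Ioo' (by linarith : -(K+1) ≤ (0:ℝ))
      hFcont.continuousOn ⟨hF0, hFneg⟩
  obtain ⟨R, hRdef⟩ : ∃ R:ℝ, R = max (max X₀ Y₀) (max (-Z₀) (-W₀)) := ⟨_, rfl⟩
  have hRX : X₀ ≤ R := by rw [hRdef]; exact le_max_of_le_left (le_max_left _ _)
  have hRY : Y₀ ≤ R := by rw [hRdef]; exact le_max_of_le_left (le_max_right _ _)
  have hRZ : -Z₀ ≤ R := by rw [hRdef]; exact le_max_of_le_right (le_max_left _ _)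
  have hRW : -W₀ ≤ R := by rw [hRdef]; exact le_max_of_le_right (le_max_right _ _)
  have hFR : F R < 0 := by
    have h4 : R = X₀ ∨ R = Y₀ ∨ R = -Z₀ ∨ R = -W₀ := by
      rw [hRdef]
      rcases max_choice (max X₀ Y₀) (max (-Z₀) (-W₀)) with h | h <;> rw [h]
      · rcases max_choice X₀ Y₀ with h' | h' <;> rw [h'] <;> tauto
      · rcases max_choice (-Z₀) (-W₀) with h' | h' <;> rw [h'] <;> tauto
    have : F R = -K := by
      simp only [hF]
      rcases h4 with h|h|h|h <;> rw [h] <;> ring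
    rw [this]; linarith
  have hFM : 0 < F (R + (K+1)) := by
    simp only [hF]
    have hprod := prod4_le (b1 := R+(K+1)-X₀) (b2 := R+(K+1)+Z₀) (b3 := R+(K+1)-Y₀)
      (b4 := R+(K+1)+W₀)
      (by linarith : (0:ℝ) < K+1) (by linarith : (0:ℝ) < K+1) (by linarith : (0:ℝ) < K+1)
      (by linarith : (0:ℝ) < K+1) (by linarith) (by linarith) (by linarith) (by linarith)
    linarith
  obtain ⟨v, hvmem, hFv⟩ := intermediate_value_Ioo (by linarith : R ≤ R + (K+1))
      hFcont.continuousOn ⟨hFR, hFM⟩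
  have huneg : u < 0 := humem.2
  have hvR : R < v := hvmem.1
  have hvpos : 0 < v := lt_of_lt_of_le hXp (le_of_lt (lt_of_le_of_lt hRX hvR))
  have huvneg : u * v < 0 := mul_neg_of_neg_of_pos huneg hvpos
  simp only [hF] at hFu hFv
  obtain ⟨s, hs⟩ : ∃ s:ℝ, s = (X₀ + Y₀ - Z₀ - W₀) - u - v := ⟨_, rfl⟩
  obtain ⟨p, hp⟩ : ∃ p:ℝ, p = (X₀*Y₀*Z₀*W₀ - K)/(u*v) := ⟨_, rfl⟩
  have hppos : 0 < p := by
    rw [hp]; exact div_pos_of_neg_of_neg hnum huvneg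
  have hpc : p * (u*v) = X₀*Y₀*Z₀*W₀ - K := by
    rw [hp]; exact div_mul_cancel₀ _ (ne_of_lt huvneg)
  obtain ⟨A, hA⟩ : ∃ A:ℝ,
      A = (X₀*Y₀ - X₀*Z₀ - X₀*W₀ - Y₀*Z₀ - Y₀*W₀ + Z₀*W₀) - (p + u*v + s*(u+v)) := ⟨_, rfl⟩
  obtain ⟨B, hB⟩ : ∃ B:ℝ,
      B = (p*(u+v) + s*(u*v)) - (-(X₀*Y₀*Z₀) + X₀*Z₀*W₀ - X₀*Y₀*W₀ + Y₀*Z₀*W₀) := ⟨_, rfl⟩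
  have hCz : X₀*Y₀*Z₀*W₀ - K - p*(u*v) = 0 := by linarith [hpc]
  have hid : ∀ t : ℝ, (t - X₀) * (t + Z₀) * (t - Y₀) * (t + W₀) - K
      = (t - u) * (t - v) * (t^2 - s*t + p) + A*t^2 + B*t + (X₀*Y₀*Z₀*W₀ - K - p*(u*v)) := by
    intro t
    rw [hA, hB, hs]; ring
  have hEu : u * (A*u + B) = 0 := by linear_combination hFu - hid u - hCz
  have hEv : v * (A*v + B) = 0 := by linear_combination hFv - hid v - hCz
  have hABu : A*u + B = 0 := by
    rcases mul_eq_zero.mp hEu with h|h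
    · exact absurd h (ne_of_lt huneg)
    · exact h
  have hABv : A*v + B = 0 := by
    rcases mul_eq_zero.mp hEv with h|h
    · exact absurd h (ne_of_gt hvpos)
    · exact h
  have hAz : A = 0 := by
    have h3 : A*(u - v) = 0 := by linear_combination hABu - hABv
    rcases mul_eq_zero.mp h3 with h|h
    · exact h
    · exfalso; have : u = v := by linarith
      linarith [this ▸ huneg, hvpos]
  have hBz : B = 0 := by linear_combination hABu - u*hAz
  have hidR : ∀ t : ℝ, (t - X₀)*(t + Z₀)*(t - Y₀)*(t + W₀) - K
      = (t - u)*(t - v)*(t^2 - s*t + p) := by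
    intro t
    have h := hid t
    rw [hAz, hBz] at h
    linear_combination h + hCz
  have hA0' : (X₀*Y₀ - X₀*Z₀ - X₀*W₀ - Y₀*Z₀ - Y₀*W₀ + Z₀*W₀) - (p + u*v + s*(u+v)) = 0 := by
    rw [← hA]; exact hAz
  have hB0' : (p*(u+v) + s*(u*v)) - (-(X₀*Y₀*Z₀) + X₀*Z₀*W₀ - X₀*Y₀*W₀ + Y₀*Z₀*W₀) = 0 := by
    rw [← hB]; exact hBz
  have hsC : (s:ℂ) = ((X₀:ℂ) + Y₀ - Z₀ - W₀) - u - v := by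
    rw [hs]; push_cast; ring
  have hAC : ((X₀:ℂ)*Y₀ - (X₀:ℂ)*Z₀ - (X₀:ℂ)*W₀ - (Y₀:ℂ)*Z₀ - (Y₀:ℂ)*W₀ + (Z₀:ℂ)*W₀)
      - ((p:ℂ) + (u:ℂ)*v + (s:ℂ)*((u:ℂ)+v)) = 0 := by exact_mod_cast hA0'
  have hBC : ((p:ℂ)*((u:ℂ)+v) + (s:ℂ)*((u:ℂ)*v))
      - (-((X₀:ℂ)*Y₀*Z₀) + (X₀:ℂ)*Z₀*W₀ - (X₀:ℂ)*Y₀*W₀ + (Y₀:ℂ)*Z₀*W₀) = 0 := by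
    exact_mod_cast hB0'
  have hCzC : ((X₀:ℂ)*Y₀*Z₀*W₀ - (K:ℂ)) - (p:ℂ)*((u:ℂ)*v) = 0 := by
    have : ((X₀*Y₀*Z₀*W₀ - K - p*(u*v) : ℝ) : ℂ) = 0 := by exact_mod_cast hCz
    push_cast at this
    linear_combination this
  have hKC : (K:ℂ) = (δ:ℂ)*μ*(X₀:ℂ)*Y₀*Z₀*W₀ := by
    rw [hKdef]; push_cast; ring
  have hidC : ∀ z : ℂ, (z - (X₀ : ℂ)) * (z + (Z₀ : ℂ)) * (z - (Y₀ : ℂ)) * (z + (W₀ : ℂ)) -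
      (δ : ℂ) * (μ : ℂ) * (X₀ : ℂ) * (Y₀ : ℂ) * (Z₀ : ℂ) * (W₀ : ℂ)
      = (z - (u:ℂ))*(z - (v:ℂ))*(z^2 - (s:ℂ)*z + (p:ℂ)) := by
    intro z
    linear_combination (z^3) * hsC + (z^2) * hAC + z * hBC + hCzC + hKC
  have key : ∀ t1 t2 : ℝ, t1 < t2 → t2 < 0 →
      (t1 - X₀)*(t1 + Z₀)*(t1 - Y₀)*(t1 + W₀) - K = 0 →
      (t2 - X₀)*(t2 + Z₀)*(t2 - Y₀)*(t2 + W₀) - K = 0 → False := by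
    intro t1 t2 hlt h2neg e1 e2
    have hmono := prod4_lt (b1 := X₀ - t1) (b2 := -Z₀ - t1) (b3 := Y₀ - t1) (b4 := -W₀ - t1)
      (by linarith : 0 < X₀ - t2) (by linarith : 0 < -Z₀ - t2)
      (by linarith : 0 < Y₀ - t2) (by linarith : 0 < -W₀ - t2)
      (by linarith) (by linarith) (by linarith) (by linarith)
    have q1 : (t1 - X₀)*(t1 + Z₀)*(t1 - Y₀)*(t1 + W₀)
        = (X₀ - t1) * (-Z₀ - t1) * (Y₀ - t1) * (-W₀ - t1) := by ring
    have q2 : (t2 - X₀)*(t2 + Z₀)*(t2 - Y₀)*(t2 + W₀)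
        = (X₀ - t2) * (-Z₀ - t2) * (Y₀ - t2) * (-W₀ - t2) := by ring
    rw [q1] at e1; rw [q2] at e2
    linarith
  rcases lt_or_ge (s^2 - 4*p) 0 with hd | hd
  · -- complex conjugate pair
    obtain ⟨x, hx⟩ : ∃ x:ℝ, x = s/2 := ⟨_, rfl⟩
    obtain ⟨y, hy⟩ : ∃ y:ℝ, y = Real.sqrt (4*p - s^2) / 2 := ⟨_, rfl⟩
    have hypos : 0 < y := by
      rw [hy]
      have : 0 < Real.sqrt (4*p - s^2) := Real.sqrt_pos.mpr (by linarith)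
      linarith
    have hy2 : y^2 = p - s^2/4 := by
      rw [hy, div_pow, Real.sq_sqrt (by linarith : (0:ℝ) ≤ 4*p - s^2)]
      ring
    have hy2C : (y:ℂ)^2 = (p:ℂ) - (s:ℂ)^2/4 := by exact_mod_cast hy2
    have hquad : ∀ z : ℂ, z^2 - (s:ℂ)*z + (p:ℂ)
        = (z - ((x:ℂ) + (y:ℂ)*Complex.I))*(z - ((x:ℂ) - (y:ℂ)*Complex.I)) := by
      intro z
      have hxC : (x:ℂ) = (s:ℂ)/2 := by rw [hx]; push_cast; ring
      linear_combination (y:ℂ)^2 * Complex.I_sq - hy2C + (2*z - (x:ℂ) - (s:ℂ)/2) * hxC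
    have hspos : 0 < s := by
      by_contra hsle
      push_neg at hsle
      have hxneg : x ≤ 0 := by rw [hx]; linarith
      have hz : ((x:ℂ) + (y:ℂ)*Complex.I)^2 - (s:ℂ)*((x:ℂ) + (y:ℂ)*Complex.I) + (p:ℂ) = 0 := by
        rw [hquad ((x:ℂ) + (y:ℂ)*Complex.I)]
        ring
      have hroot := hidC ((x:ℂ) + (y:ℂ)*Complex.I)
      have hprodK : ((((x:ℂ) + (y:ℂ)*Complex.I) - (X₀:ℂ)) * (((x:ℂ) + (y:ℂ)*Complex.I) + (Z₀:ℂ)))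
          * ((((x:ℂ) + (y:ℂ)*Complex.I) - (Y₀:ℂ)) * (((x:ℂ) + (y:ℂ)*Complex.I) + (W₀:ℂ)))
          = ((K:ℝ):ℂ) := by
        linear_combination hroot - hKC + ((((x:ℂ) + (y:ℂ)*Complex.I)) - (u:ℂ))*((((x:ℂ) + (y:ℂ)*Complex.I)) - (v:ℂ)) * hz
      refine aux_not_pos_real ?_ ?_ hKpos hprodK
      · have h3 : ((((x:ℂ) + (y:ℂ)*Complex.I) - (X₀:ℂ)) * (((x:ℂ) + (y:ℂ)*Complex.I) + (Z₀:ℂ))).im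
            = y * ((x - X₀) + (x + Z₀)) := by
          simp only [Complex.mul_im, Complex.add_re, Complex.sub_re, Complex.add_im,
            Complex.sub_im, Complex.mul_re, Complex.ofReal_re, Complex.ofReal_im,
            Complex.I_re, Complex.I_im]
          ring
        rw [h3]
        exact mul_neg_of_pos_of_neg hypos (by linarith)
      · have h3 : ((((x:ℂ) + (y:ℂ)*Complex.I) - (Y₀:ℂ)) * (((x:ℂ) + (y:ℂ)*Complex.I) + (W₀:ℂ))).im
            = y * ((x - Y₀) + (x + W₀)) := by
          simp only [Complex.mul_im, Complex.add_re, Complex.sub_re, Complex.add_im,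
            Complex.sub_im, Complex.mul_re, Complex.ofReal_re, Complex.ofReal_im,
            Complex.I_re, Complex.I_im]
          ring
        rw [h3]
        exact mul_neg_of_pos_of_neg hypos (by linarith)
    refine ⟨(x:ℂ) + (y:ℂ)*Complex.I, (x:ℂ) - (y:ℂ)*Complex.I, u, v, huneg, ?_, ?_, ?_, ?_⟩
    · rw [abs_of_neg hZn, abs_of_neg hWn, ← hRdef]; exact hvR
    · simp only [Complex.add_re, Complex.ofReal_re, Complex.mul_re, Complex.ofReal_im,
        Complex.I_re, Complex.I_im]
      rw [hx]; norm_num; linarith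
    · simp only [Complex.sub_re, Complex.ofReal_re, Complex.mul_re, Complex.ofReal_im,
        Complex.I_re, Complex.I_im]
      rw [hx]; norm_num; linarith
    · intro z
      linear_combination hidC z + (z - (u:ℂ))*(z - (v:ℂ)) * hquad z
  · -- two more real roots
    obtain ⟨e, he⟩ : ∃ e:ℝ, e = Real.sqrt (s^2 - 4*p) := ⟨_, rfl⟩
    have he0 : 0 ≤ e := he ▸ Real.sqrt_nonneg _
    have he2 : e^2 = s^2 - 4*p := by rw [he]; exact Real.sq_sqrt (by linarith)
    obtain ⟨l1, hl1⟩ : ∃ l1:ℝ, l1 = (s+e)/2 := ⟨_, rfl⟩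
    obtain ⟨l2, hl2⟩ : ∃ l2:ℝ, l2 = (s-e)/2 := ⟨_, rfl⟩
    have hsum : l1 + l2 = s := by rw [hl1, hl2]; ring
    have hprodp : l1 * l2 = p := by rw [hl1, hl2]; linear_combination (-(1:ℝ)/4) * he2
    have hq1 : l1^2 - s*l1 + p = 0 := by linear_combination l1*hsum - hprodp
    have hq2 : l2^2 - s*l2 + p = 0 := by linear_combination l2*hsum - hprodp
    have hr1 : (l1 - X₀)*(l1 + Z₀)*(l1 - Y₀)*(l1 + W₀) - K = 0 := by
      linear_combination (hidR l1) + (l1-u)*(l1-v)*hq1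
    have hr2 : (l2 - X₀)*(l2 + Z₀)*(l2 - Y₀)*(l2 + W₀) - K = 0 := by
      linear_combination (hidR l2) + (l2-u)*(l2-v)*hq2
    have hspos : 0 < s := by
      by_contra hsle
      push_neg at hsle
      have hes : e + s < 0 := by
        by_contra hcon
        push_neg at hcon
        have h1 : (0:ℝ) ≤ e - s := by linarith
        have h2 := mul_nonneg hcon h1
        linarith [he2, hppos, h2]
      have hl1neg : l1 < 0 := by rw [hl1]; linarith
      have hl2le : l2 ≤ l1 := by rw [hl1, hl2]; linarith
      rcases eq_or_lt_of_le hl2le with heq | hlt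
      · have he0' : e = 0 := by rw [hl1, hl2] at heq; linarith
        have hl1s : l1 = s/2 := by rw [hl1, he0']; ring
        have hsu : s = 2*l1 := by linarith
        rcases eq_or_ne l1 u with hequ | hneu
        · -- triple root at u : coefficient contradiction
          have hs2 : s^2 = 4*p := by
            rw [he0'] at he2; linarith
          have hpu : p = l1^2 := by
            linear_combination (-(1:ℝ)/4) * hs2 + ((s + 2*l1)/4) * hsu
          have he1pos : 0 < X₀ + Y₀ - Z₀ - W₀ := by linarith
          have he2pos : 0 < X₀*Y₀ - X₀*Z₀ - X₀*W₀ - Y₀*Z₀ - Y₀*W₀ + Z₀*W₀ := by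
            linarith [mul_pos hXp hYp, hZW, mul_pos hXp (neg_pos.mpr hZn),
              mul_pos hXp (neg_pos.mpr hWn), mul_pos hYp (neg_pos.mpr hZn),
              mul_pos hYp (neg_pos.mpr hWn)]
          have heq2 : p + u*v + s*(u+v) = 3*u^2 + 3*(u*v) := by
            linear_combination hpu + (u + v)*hsu + (l1 + u + 2*(u+v))*hequ
          have hkey : 0 < 3*u^2 + 3*(u*v) := by linarith [hA0', he2pos, heq2]
          have hv3 : 0 < 3*u + v := by linarith [hs, hsu, hequ, he1pos]
          have hm : u*(3*u+v) < 0 := mul_neg_of_neg_of_pos huneg hv3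
          have hu2 : 0 < u*u := mul_pos_of_neg_of_neg huneg huneg
          linarith [hm, hkey, hu2]
        · rcases lt_or_gt_of_ne hneu with h | h
          · exact key l1 u h huneg hr1 hFu
          · exact key u l1 h hl1neg hFu hr1
      · exact key l2 l1 hlt hl1neg hr2 hr1
    have heslt : e < s := by
      by_contra hcon
      push_neg at hcon
      have h2 := mul_nonneg (by linarith : (0:ℝ) ≤ e + s) (by linarith : (0:ℝ) ≤ e - s)
      linarith [he2, hppos, h2]
    have hl2pos : 0 < l2 := by rw [hl2]; linarith
    have hl1pos : 0 < l1 := by rw [hl1]; linarith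
    refine ⟨(l1:ℂ), (l2:ℂ), u, v, huneg, ?_, ?_, ?_, ?_⟩
    · rw [abs_of_neg hZn, abs_of_neg hWn, ← hRdef]; exact hvR
    · simpa using hl1pos
    · simpa using hl2pos
    · intro z
      have hsumC : (l1:ℂ) + (l2:ℂ) = (s:ℂ) := by exact_mod_cast hsum
      have hprodC : (l1:ℂ) * (l2:ℂ) = (p:ℂ) := by exact_mod_cast hprodp
      linear_combination hidC z + (z - (u:ℂ))*(z - (v:ℂ)) * (z * hsumC - hprodC)
end
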